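/- arXiv:1910.07159 — 4 statements merged into one kernel-verified Lean document; each statement's English description precedes it below -/
import Mathlib

section
/- In a graph G=(V,E), construct the HRLQ instance G' with, for each vertex v_i of degree d with neighbors v_{j1},…,v_{jd}: residents r1^i (list: h3^i, h2^{j1},…,h2^{jd}, h1^i), r2^i (list: h2^i, h3^i), r3^i (list: h2^i), and hospitals h1^i with quotas [0,1] (list: r1^i), h2^i with quotas [0,1] (list: r2^i, r1^{j1},…,r1^{jd}, r3^i), h3^i with quotas [1,1] (list: r2^i, r1^i), using a fixed global vertex ordering for neighbor lists. Then the maximum size of a feasible relaxed stable matching in G' equals 3|V| minus the size of a minimum vertex cover of G. -/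
/-- An HRLQ instance: bipartite graph on residents `R` and hospitals `H` with
strict preferences encoded as rank functions (lower rank = more preferred)
and lower/upper quotas per hospital. -/
structure HRLQ (R H : Type) where
  E : R → H → Prop
  rPref : R → H → ℕ
  hPref : H → R → ℕ
  lq : H → ℕ
  uq : H → ℕ

namespace HRLQ

variable {R H : Type}

/-- residents matched to hospital `h` -/
def matchedTo (M : R → Option H) (h : H) : Set R := {r | M r = some h}

/-- size of a matching -/
noncomputable def msize (M : R → Option H) : ℕ := {r | M r ≠ none}.ncard

variable (I : HRLQ R H)

/-- resident `r` strictly prefers hospital `h` to assignment `o`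
    (being unmatched is least preferred); `h` must be acceptable to `r`. -/
def PrefersH (r : R) (h : H) (o : Option H) : Prop :=
  I.E r h ∧ ∀ h', o = some h' → I.rPref r h < I.rPref r h'

def IsMatching (M : R → Option H) : Prop :=
  (∀ r h, M r = some h → I.E r h) ∧ ∀ h, (matchedTo M h).ncard ≤ I.uq h

def Feasible (M : R → Option H) : Prop :=
  ∀ h, I.lq h ≤ (matchedTo M h).ncard

def Blocks (M : R → Option H) (r : R) (h : H) : Prop :=
  I.E r h ∧ M r ≠ some h ∧ I.PrefersH r h (M r) ∧
    ((matchedTo M h).ncard < I.uq h ∨ ∃ r' ∈ matchedTo M h, I.hPref h r < I.hPref h r')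

def Stable (M : R → Option H) : Prop := ∀ r h, ¬ I.Blocks M r h

def Envies (M : R → Option H) (r r' : R) : Prop :=
  ∃ h, M r' = some h ∧ I.PrefersH r h (M r) ∧ I.hPref h r < I.hPref h r'

def EnvyFree (M : R → Option H) : Prop := ∀ r r', ¬ I.Envies M r r'

def RelaxedStable (M : R → Option H) : Prop :=
  (∀ h, {r | r ∈ matchedTo M h ∧ ∃ h', I.Blocks M r h'}.ncard ≤ I.lq h) ∧
  ∀ r, M r = none → ∀ h, ¬ I.Blocks M r h

/-- preferences are strict -/
def StrictPrefs : Prop :=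
  (∀ r, Function.Injective (I.rPref r)) ∧ ∀ h, Function.Injective (I.hPref h)

end HRLQ

namespace HRLQ
variable {R H : Type}

theorem uq_one_unique [Finite R] (I : HRLQ R H) {M : R → Option H} (hM : I.IsMatching M)
    {h : H} (hu : I.uq h = 1) {r r' : R} (hne : r ≠ r')
    (h1 : M r = some h) (h2 : M r' = some h) : False := by
  have hsub : ({r, r'} : Set R) ⊆ matchedTo M h := by
    intro x hx
    rcases hx with rfl | hx
    · exact h1
    · simp only [Set.mem_singleton_iff] at hx; subst hx; exact h2
  have h2le : 2 ≤ (matchedTo M h).ncard := by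
    rw [← Set.ncard_pair hne]
    exact Set.ncard_le_ncard hsub (Set.toFinite _)
  have := hM.2 h
  omega

theorem no_block_of_lq_zero [Finite R] (I : HRLQ R H) {M : R → Option H}
    (hRS : I.RelaxedStable M) {h : H} (h0 : I.lq h = 0) {r : R} (hr : M r = some h)
    {h' : H} (hb : I.Blocks M r h') : False := by
  have hpos : 0 < {x | x ∈ matchedTo M h ∧ ∃ h', I.Blocks M x h'}.ncard :=
    (Set.ncard_pos (Set.toFinite _)).mpr ⟨r, hr, h', hb⟩
  have := hRS.1 h
  omega

end HRLQ

/-- Chain predicate used for the infinite-descent argument. -/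
def RChain {V : Type} [LinearOrder V] (G : SimpleGraph V)
    (M : V × Fin 3 → Option (V × Fin 3)) (a b : V) : Prop :=
  G.Adj a b ∧ M (a, 1) = some (a, 2) ∧ M (a, 0) ≠ some (b, 1) ∧
  (∃ r, M r = some (b, 1) ∧ (r = (b, 2) ∨ ∃ z, a < z ∧ r = (z, 0))) ∧
  (∃ r, M r = some (a, 1) ∧ (r = (a, 2) ∨ ∃ z, b ≤ z ∧ r = (z, 0)))


/-- Vertex cover reduction for MAXRSM: in the reduced HRLQ instance (residents
r1ⁱ,r2ⁱ,r3ⁱ and hospitals h1ⁱ,h2ⁱ,h3ⁱ per vertex vᵢ, with the preference lists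
r1ⁱ: h3ⁱ,h2-neighbors,h1ⁱ; r2ⁱ: h2ⁱ,h3ⁱ; r3ⁱ: h2ⁱ; h1ⁱ [0,1]: r1ⁱ;
h2ⁱ [0,1]: r2ⁱ,r1-neighbors,r3ⁱ; h3ⁱ [1,1]: r2ⁱ,r1ⁱ, using a fixed global
vertex ordering), the maximum size of a feasible relaxed stable matching equals
3|V| minus the minimum size of a vertex cover of G. -/
theorem max_relaxed_stable_eq_vertex_cover
    {V : Type} [Fintype V] [LinearOrder V]
    (G : SimpleGraph V) [DecidableRel G.Adj]
    (I : HRLQ (V × Fin 3) (V × Fin 3))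
    (hstrict : I.StrictPrefs)
    -- acceptability structure (resident indices: 0=r1,1=r2,2=r3; hospital: 0=h1,1=h2,2=h3)
    (hE1 : ∀ v u (j : Fin 3), I.E (v, 0) (u, j) ↔
      (u = v ∧ (j = 2 ∨ j = 0)) ∨ (G.Adj v u ∧ j = 1))
    (hE2 : ∀ v u (j : Fin 3), I.E (v, 1) (u, j) ↔ u = v ∧ (j = 1 ∨ j = 2))
    (hE3 : ∀ v u (j : Fin 3), I.E (v, 2) (u, j) ↔ u = v ∧ j = 1)
    -- r1ᵛ: h3ᵛ first, then the h2's of neighbors in the global order, then h1ᵛ last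
    (hr1a : ∀ v u, G.Adj v u → I.rPref (v, 0) (v, 2) < I.rPref (v, 0) (u, 1))
    (hr1b : ∀ v u w, G.Adj v u → G.Adj v w → u < w →
      I.rPref (v, 0) (u, 1) < I.rPref (v, 0) (w, 1))
    (hr1c : ∀ v u, G.Adj v u → I.rPref (v, 0) (u, 1) < I.rPref (v, 0) (v, 0))
    (hr1d : ∀ v, I.rPref (v, 0) (v, 2) < I.rPref (v, 0) (v, 0))
    -- r2ᵛ: h2ᵛ then h3ᵛ
    (hr2 : ∀ v, I.rPref (v, 1) (v, 1) < I.rPref (v, 1) (v, 2))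
    -- h2ᵛ: r2ᵛ first, then the r1's of neighbors in the global order, then r3ᵛ last
    (hh2a : ∀ v u, G.Adj v u → I.hPref (v, 1) (v, 1) < I.hPref (v, 1) (u, 0))
    (hh2b : ∀ v u w, G.Adj v u → G.Adj v w → u < w →
      I.hPref (v, 1) (u, 0) < I.hPref (v, 1) (w, 0))
    (hh2c : ∀ v u, G.Adj v u → I.hPref (v, 1) (u, 0) < I.hPref (v, 1) (v, 2))
    (hh2d : ∀ v, I.hPref (v, 1) (v, 1) < I.hPref (v, 1) (v, 2))
    -- h3ᵛ: r2ᵛ then r1ᵛ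
    (hh3 : ∀ v, I.hPref (v, 2) (v, 1) < I.hPref (v, 2) (v, 0))
    -- quotas: h3ᵛ has quotas [1,1], all others [0,1]
    (hlq : ∀ v (j : Fin 3), I.lq (v, j) = if j = 2 then 1 else 0)
    (huq : ∀ v (j : Fin 3), I.uq (v, j) = 1) :
    sSup {n | ∃ M, I.IsMatching M ∧ I.Feasible M ∧ I.RelaxedStable M ∧
        HRLQ.msize M = n} =
      3 * Fintype.card V -
        sInf {c | ∃ S : Finset V, S.card = c ∧
          ∀ u w, G.Adj u w → u ∈ S ∨ w ∈ S} := by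
  classical
  have hcard3 : Nat.card (V × Fin 3) = 3 * Fintype.card V := by
    simp [Nat.card_eq_fintype_card, mul_comm]
  -- generic helper: options for each resident
  have hopt1 : ∀ (M : V × Fin 3 → Option (V × Fin 3)), I.IsMatching M →
      ∀ v h, M (v, 0) = some h →
      h = (v, 2) ∨ h = (v, 0) ∨ ∃ u, G.Adj v u ∧ h = (u, 1) := by
    rintro M hM v ⟨u, j⟩ hm
    have hE := hM.1 _ _ hm
    rw [hE1] at hE
    rcases hE with ⟨rfl, hj | hj⟩ | ⟨ha, hj⟩
    · subst hj; exact Or.inl rfl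
    · subst hj; exact Or.inr (Or.inl rfl)
    · subst hj; exact Or.inr (Or.inr ⟨u, ha, rfl⟩)
  have hopt2 : ∀ (M : V × Fin 3 → Option (V × Fin 3)), I.IsMatching M →
      ∀ v h, M (v, 1) = some h → h = (v, 1) ∨ h = (v, 2) := by
    rintro M hM v ⟨u, j⟩ hm
    have hE := hM.1 _ _ hm
    rw [hE2] at hE
    rcases hE with ⟨rfl, hj | hj⟩
    · subst hj; exact Or.inl rfl
    · subst hj; exact Or.inr rfl
  have hopt3 : ∀ (M : V × Fin 3 → Option (V × Fin 3)), I.IsMatching M →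
      ∀ v h, M (v, 2) = some h → h = (v, 1) := by
    rintro M hM v ⟨u, j⟩ hm
    have hE := hM.1 _ _ hm
    rw [hE3] at hE
    rcases hE with ⟨rfl, rfl⟩
    rfl
  -- generic helper: who can be matched to h2^v, and comparisons
  have hacc2 : ∀ v (r : V × Fin 3), I.E r (v, 1) →
      r = (v, 1) ∨ r = (v, 2) ∨ ∃ z, G.Adj v z ∧ r = (z, 0) := by
    rintro v ⟨u, i⟩ hE
    fin_cases i
    · rcases (hE1 u v 1).mp hE with ⟨rfl, hj | hj⟩ | ⟨ha, hj⟩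
      · exact absurd hj (by decide)
      · exact absurd hj (by decide)
      · exact Or.inr (Or.inr ⟨u, ha.symm, rfl⟩)
    · rcases (hE2 u v 1).mp hE with ⟨rfl, hj⟩
      exact Or.inl rfl
    · rcases (hE3 u v 1).mp hE with ⟨rfl, hj⟩
      exact Or.inr (Or.inl rfl)
  have htop2 : ∀ v (r : V × Fin 3), I.E r (v, 1) → r ≠ (v, 1) →
      I.hPref (v, 1) (v, 1) < I.hPref (v, 1) r := by
    intro v r hE hne
    rcases hacc2 v r hE with rfl | rfl | ⟨z, hz, rfl⟩
    · exact absurd rfl hne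
    · exact hh2d v
    · exact hh2a v z hz
  have hworse2 : ∀ (M : V × Fin 3 → Option (V × Fin 3)), I.IsMatching M →
      ∀ v a (r : V × Fin 3), G.Adj v a → M r = some (v, 1) →
      (r = (v, 2) ∨ ∃ z, a < z ∧ r = (z, 0)) →
      I.hPref (v, 1) (a, 0) < I.hPref (v, 1) r := by
    rintro M hM v a r hadj hr (rfl | ⟨z, hz, rfl⟩)
    · exact hh2c v a hadj
    · have hE := hM.1 _ _ hr
      rw [hE1] at hE
      rcases hE with ⟨rfl, hj | hj⟩ | ⟨ha, hj⟩
      · exact absurd hj (by decide)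
      · exact absurd hj (by decide)
      · exact hh2b v a z hadj ha.symm hz
  -- Part A : construction from a vertex cover
  have hA : ∀ S : Finset V, (∀ u w, G.Adj u w → u ∈ S ∨ w ∈ S) →
      ∃ M, I.IsMatching M ∧ I.Feasible M ∧ I.RelaxedStable M ∧
        HRLQ.msize M = 3 * Fintype.card V - S.card := by
    intro S hcov
    set MS : V × Fin 3 → Option (V × Fin 3) := fun p =>
      if p.2 = 0 then (if p.1 ∈ S then some (p.1, 2) else some (p.1, 0))
      else if p.2 = 1 then (if p.1 ∈ S then some (p.1, 1) else some (p.1, 2))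
      else if p.1 ∈ S then none else some (p.1, 1) with hMSdef
    have hMS0 : ∀ v : V, MS (v, 0) =
        if v ∈ S then some (v, 2) else some (v, 0) := fun v => rfl
    have hMS1 : ∀ v : V, MS (v, 1) =
        if v ∈ S then some (v, 1) else some (v, 2) := fun v => rfl
    have hMS2 : ∀ v : V, MS (v, 2) =
        if v ∈ S then none else some (v, 1) := fun v => rfl
    have hcases : ∀ i : Fin 3, i = 0 ∨ i = 1 ∨ i = 2 := by decide
    -- matched sets
    have hmt0 : ∀ u : V, HRLQ.matchedTo MS (u, 0) =
        if u ∈ S then (∅ : Set (V × Fin 3)) else {(u, 0)} := by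
      intro u
      ext ⟨v, i⟩
      simp only [HRLQ.matchedTo, Set.mem_setOf_eq]
      rcases hcases i with rfl | rfl | rfl <;>
        [rw [hMS0 v]; rw [hMS1 v]; rw [hMS2 v]] <;>
        by_cases hv : v ∈ S <;> by_cases hu : u ∈ S <;>
        simp [hv, hu, Prod.ext_iff] <;>
        (try (rintro rfl; exact hv hu)) <;> (try (rintro rfl; exact hu hv))
    have hmt1 : ∀ u : V, HRLQ.matchedTo MS (u, 1) =
        if u ∈ S then {((u, 1) : V × Fin 3)} else {(u, 2)} := by
      intro u
      ext ⟨v, i⟩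
      simp only [HRLQ.matchedTo, Set.mem_setOf_eq]
      rcases hcases i with rfl | rfl | rfl <;>
        [rw [hMS0 v]; rw [hMS1 v]; rw [hMS2 v]] <;>
        by_cases hv : v ∈ S <;> by_cases hu : u ∈ S <;>
        simp [hv, hu, Prod.ext_iff] <;>
        (try (rintro rfl; exact hv hu)) <;> (try (rintro rfl; exact hu hv))
    have hmt2 : ∀ u : V, HRLQ.matchedTo MS (u, 2) =
        if u ∈ S then {((u, 0) : V × Fin 3)} else {(u, 1)} := by
      intro u
      ext ⟨v, i⟩
      simp only [HRLQ.matchedTo, Set.mem_setOf_eq]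
      rcases hcases i with rfl | rfl | rfl <;>
        [rw [hMS0 v]; rw [hMS1 v]; rw [hMS2 v]] <;>
        by_cases hv : v ∈ S <;> by_cases hu : u ∈ S <;>
        simp [hv, hu, Prod.ext_iff] <;>
        (try (rintro rfl; exact hv hu)) <;> (try (rintro rfl; exact hu hv))
    -- MS is a matching
    have hMSmatch : I.IsMatching MS := by
      constructor
      · rintro ⟨v, i⟩ h hm
        rcases hcases i with rfl | rfl | rfl
        · rw [hMS0 v] at hm
          by_cases hv : v ∈ S
          · rw [if_pos hv] at hm; injection hm with hm; subst hm
            exact (hE1 v v 2).mpr (Or.inl ⟨rfl, Or.inl rfl⟩)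
          · rw [if_neg hv] at hm; injection hm with hm; subst hm
            exact (hE1 v v 0).mpr (Or.inl ⟨rfl, Or.inr rfl⟩)
        · rw [hMS1 v] at hm
          by_cases hv : v ∈ S
          · rw [if_pos hv] at hm; injection hm with hm; subst hm
            exact (hE2 v v 1).mpr ⟨rfl, Or.inl rfl⟩
          · rw [if_neg hv] at hm; injection hm with hm; subst hm
            exact (hE2 v v 2).mpr ⟨rfl, Or.inr rfl⟩
        · rw [hMS2 v] at hm
          by_cases hv : v ∈ S
          · rw [if_pos hv] at hm; cases hm
          · rw [if_neg hv] at hm; injection hm with hm; subst hm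
            exact (hE3 v v 1).mpr ⟨rfl, rfl⟩
      · rintro ⟨u, j⟩
        rw [huq]
        rcases hcases j with rfl | rfl | rfl
        · rw [hmt0 u]; split_ifs <;> simp
        · rw [hmt1 u]; split_ifs <;> simp
        · rw [hmt2 u]; split_ifs <;> simp
    -- MS is feasible
    have hMSfeas : I.Feasible MS := by
      rintro ⟨u, j⟩
      rw [hlq]
      rcases hcases j with rfl | rfl | rfl
      · simp
      · simp
      · rw [hmt2 u]; split_ifs <;> simp
    -- no resident matched to an h1 or h2 hospital blocks; unmatched don't block
    have hnb1 : ∀ v, v ∉ S → ∀ h', ¬ I.Blocks MS (v, 0) h' := by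
      intro v hv h' hb
      obtain ⟨hEb, hne, hpref, hq⟩ := hb
      obtain ⟨u, j⟩ := h'
      rcases (hE1 v u j).mp hEb with ⟨rfl, hj | hj⟩ | ⟨ha, hj⟩
      · subst hj
        rcases hq with hlt | ⟨r', hr', hlt⟩
        · rw [hmt2 u, if_neg hv, Set.ncard_singleton, huq] at hlt
          exact lt_irrefl _ hlt
        · rw [hmt2 u, if_neg hv, Set.mem_singleton_iff] at hr'
          subst hr'
          exact absurd hlt (by have := hh3 u; omega)
      · subst hj
        exact hne (by rw [hMS0 u, if_neg hv])
      · subst hj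
        have hu : u ∈ S := (hcov v u ha).resolve_left hv
        rcases hq with hlt | ⟨r', hr', hlt⟩
        · rw [hmt1 u, if_pos hu, Set.ncard_singleton, huq] at hlt
          exact lt_irrefl _ hlt
        · rw [hmt1 u, if_pos hu, Set.mem_singleton_iff] at hr'
          subst hr'
          exact absurd hlt (by have := hh2a u v ha.symm; omega)
    have hnb1' : ∀ v, v ∈ S → ∀ h', ¬ I.Blocks MS (v, 0) h' := by
      intro v hv h' hb
      obtain ⟨hEb, hne, hpref, hq⟩ := hb
      obtain ⟨u, j⟩ := h'
      have hmv : MS (v, 0) = some (v, 2) := by rw [hMS0 v, if_pos hv]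
      rcases (hE1 v u j).mp hEb with ⟨rfl, hj | hj⟩ | ⟨ha, hj⟩
      · subst hj; exact hne hmv
      · subst hj
        have := hpref.2 (u, 2) hmv
        exact absurd this (by have := hr1d u; omega)
      · subst hj
        have := hpref.2 (v, 2) hmv
        exact absurd this (by have := hr1a v u ha; omega)
    have hnb2 : ∀ v, v ∈ S → ∀ h', ¬ I.Blocks MS (v, 1) h' := by
      intro v hv h' hb
      obtain ⟨hEb, hne, hpref, hq⟩ := hb
      obtain ⟨u, j⟩ := h'
      have hmv : MS (v, 1) = some (v, 1) := by rw [hMS1 v, if_pos hv]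
      rcases (hE2 v u j).mp hEb with ⟨rfl, hj | hj⟩
      · subst hj; exact hne hmv
      · subst hj
        have := hpref.2 (u, 1) hmv
        exact absurd this (by have := hr2 u; omega)
    have hnb2' : ∀ v, v ∉ S → ∀ h', ¬ I.Blocks MS (v, 2) h' := by
      intro v hv h' hb
      obtain ⟨hEb, hne, _, _⟩ := hb
      obtain ⟨u, j⟩ := h'
      rcases (hE3 v u j).mp hEb with ⟨rfl, hj⟩
      subst hj
      exact hne (by rw [hMS2 u, if_neg hv])
    have hnb4 : ∀ v, v ∈ S → ∀ h', ¬ I.Blocks MS (v, 2) h' := by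
      intro v hv h' hb
      obtain ⟨hEb, hne, hpref, hq⟩ := hb
      obtain ⟨u, j⟩ := h'
      rcases (hE3 v u j).mp hEb with ⟨rfl, hj⟩
      subst hj
      rcases hq with hlt | ⟨r', hr', hlt⟩
      · rw [hmt1 u, if_pos hv, Set.ncard_singleton, huq] at hlt
        exact lt_irrefl _ hlt
      · rw [hmt1 u, if_pos hv, Set.mem_singleton_iff] at hr'
        subst hr'
        exact absurd hlt (by have := hh2d u; omega)
    -- MS is relaxed stable
    have hMSrs : I.RelaxedStable MS := by
      constructor
      · rintro ⟨u, j⟩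
        rw [hlq]
        rcases hcases j with rfl | rfl | rfl
        · have he : {r | r ∈ HRLQ.matchedTo MS (u, 0) ∧ ∃ h', I.Blocks MS r h'} = ∅ := by
            ext r
            simp only [Set.mem_setOf_eq, Set.mem_empty_iff_false, iff_false, not_and]
            intro hr hex
            obtain ⟨h', hb⟩ := hex
            rw [hmt0 u] at hr
            by_cases hu : u ∈ S
            · rw [if_pos hu] at hr; exact hr
            · rw [if_neg hu, Set.mem_singleton_iff] at hr; subst hr
              exact hnb1 u hu h' hb
          rw [he]
          simp
        · have he : {r | r ∈ HRLQ.matchedTo MS (u, 1) ∧ ∃ h', I.Blocks MS r h'} = ∅ := by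
            ext r
            simp only [Set.mem_setOf_eq, Set.mem_empty_iff_false, iff_false, not_and]
            intro hr hex
            obtain ⟨h', hb⟩ := hex
            rw [hmt1 u] at hr
            by_cases hu : u ∈ S
            · rw [if_pos hu, Set.mem_singleton_iff] at hr; subst hr
              exact hnb2 u hu h' hb
            · rw [if_neg hu, Set.mem_singleton_iff] at hr; subst hr
              exact hnb2' u hu h' hb
          rw [he]
          simp
        · have hsub : {r | r ∈ HRLQ.matchedTo MS (u, 2) ∧ ∃ h', I.Blocks MS r h'} ⊆
              HRLQ.matchedTo MS (u, 2) := fun r hr => hr.1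
          have hle := Set.ncard_le_ncard hsub (Set.toFinite _)
          have : (HRLQ.matchedTo MS (u, 2)).ncard = 1 := by
            rw [hmt2 u]; split_ifs <;> simp
          rw [if_pos rfl]
          omega
      · rintro ⟨v, i⟩ hnone h'
        rcases hcases i with rfl | rfl | rfl
        · rw [hMS0 v] at hnone; split_ifs at hnone <;> cases hnone
        · rw [hMS1 v] at hnone; split_ifs at hnone <;> cases hnone
        · by_cases hv : v ∈ S
          · exact hnb4 v hv h'
          · rw [hMS2 v, if_neg hv] at hnone; cases hnone
    -- size of MS
    have hun : {r | MS r ≠ none} = ((fun v : V => ((v, 2) : V × Fin 3)) '' ↑S)ᶜ := by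
      ext ⟨v, i⟩
      simp only [Set.mem_setOf_eq, Set.mem_compl_iff, Set.mem_image, Finset.mem_coe]
      rcases hcases i with rfl | rfl | rfl
      · rw [hMS0 v]; split_ifs <;> simp [Prod.ext_iff]
      · rw [hMS1 v]; split_ifs <;> simp [Prod.ext_iff]
      · rw [hMS2 v]
        by_cases hv : v ∈ S
        · rw [if_pos hv]; simp [Prod.ext_iff, hv]
        · rw [if_neg hv]; simp [Prod.ext_iff, hv]
    have himg : ((fun v : V => ((v, 2) : V × Fin 3)) '' ↑S).ncard = S.card := by
      rw [Set.ncard_image_of_injective _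
        (fun a b hab => (Prod.ext_iff.mp hab).1), Set.ncard_coe_finset]
    have hszeq : HRLQ.msize MS = 3 * Fintype.card V - S.card := by
      have h2 := Set.ncard_add_ncard_compl ((fun v : V => ((v, 2) : V × Fin 3)) '' ↑S)
      rw [hcard3, himg] at h2
      rw [HRLQ.msize, hun]
      omega
    exact ⟨MS, hMSmatch, hMSfeas, hMSrs, hszeq⟩
  -- minimum vertex cover
  have hCCne : {c | ∃ S : Finset V, S.card = c ∧
      ∀ u w, G.Adj u w → u ∈ S ∨ w ∈ S}.Nonempty :=
    ⟨Finset.univ.card, Finset.univ, rfl, fun u w _ => Or.inl (Finset.mem_univ u)⟩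
  obtain ⟨S₀, hS₀card, hS₀cov⟩ := Nat.sInf_mem hCCne
  -- rank function for the descent
  have hrk : ∀ {x y : V}, x < y →
      (Finset.univ.filter (fun z => z < x)).card <
        (Finset.univ.filter (fun z => z < y)).card := by
    intro x y hxy
    apply Finset.card_lt_card
    constructor
    · intro z hz
      simp only [Finset.mem_filter, Finset.mem_univ, true_and] at hz ⊢
      exact lt_trans hz hxy
    · intro hsub
      have := hsub (by simp [hxy] : x ∈ Finset.univ.filter (fun z => z < y))
      simp at this
  -- Part B : any feasible relaxed stable matching has size ≤ 3|V| - min cover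
  have hB : ∀ n ∈ {n | ∃ M, I.IsMatching M ∧ I.Feasible M ∧ I.RelaxedStable M ∧
      HRLQ.msize M = n}, n ≤ 3 * Fintype.card V -
        sInf {c | ∃ S : Finset V, S.card = c ∧
          ∀ u w, G.Adj u w → u ∈ S ∨ w ∈ S} := by
    rintro n ⟨M, hM, hF, hRS, rfl⟩
    -- r2 of v gets matched to h3 of v whenever h2 of v is occupied by someone else
    have hr2loc : ∀ v (r : V × Fin 3), M r = some (v, 1) → r ≠ (v, 1) →
        M (v, 1) = some (v, 2) := by
      intro v r hr hne
      cases hm : M (v, 1) with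
      | none =>
        exfalso
        apply hRS.2 (v, 1) hm (v, 1)
        refine ⟨(hE2 v v 1).mpr ⟨rfl, Or.inl rfl⟩, by rw [hm]; simp,
          ⟨(hE2 v v 1).mpr ⟨rfl, Or.inl rfl⟩, fun h' hh => by rw [hm] at hh; cases hh⟩,
          Or.inr ⟨r, hr, htop2 v r (hM.1 _ _ hr) hne⟩⟩
      | some h =>
        rcases hopt2 M hM v h hm with rfl | rfl
        · exact (I.uq_one_unique hM (huq v 1) hne hr hm).elim
        · rfl
    -- the descent step
    have hstep : ∀ a b, RChain G M a b → ∃ c, c < b ∧ RChain G M c a := by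
      rintro a b ⟨hab, hm2a, hne1, ⟨rb, hrb, hwb⟩, ⟨ra, hra, hwa⟩⟩
      have hEab : I.E (a, 0) (b, 1) := (hE1 a b 1).mpr (Or.inr ⟨hab, rfl⟩)
      have hwb' : I.hPref (b, 1) (a, 0) < I.hPref (b, 1) rb :=
        hworse2 M hM b a rb hab.symm hrb hwb
      have hmain : ∃ c, G.Adj a c ∧ c < b ∧ M (a, 0) = some (c, 1) := by
        cases hma : M (a, 0) with
        | none =>
          exfalso
          apply hRS.2 (a, 0) hma (b, 1)
          exact ⟨hEab, by rw [hma]; simp,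
            ⟨hEab, fun h' hh => by rw [hma] at hh; cases hh⟩,
            Or.inr ⟨rb, hrb, hwb'⟩⟩
        | some h =>
          rcases hopt1 M hM a h hma with rfl | rfl | ⟨u, hadj, rfl⟩
          · exact (I.uq_one_unique hM (huq a 2) (by simp) hma hm2a).elim
          · exfalso
            apply I.no_block_of_lq_zero hRS (by rw [hlq]; simp) hma
            exact ⟨hEab, hne1,
              ⟨hEab, fun h' hh => by
                rw [hma] at hh; injection hh with hh; subst hh
                exact hr1c a b hab⟩,
              Or.inr ⟨rb, hrb, hwb'⟩⟩
          · have hub : u ≠ b := fun h => hne1 (h ▸ hma)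
            have hlt : u < b := by
              rcases lt_or_gt_of_ne hub with h | h
              · exact h
              · exfalso
                apply I.no_block_of_lq_zero hRS (h := (u, 1)) (by rw [hlq]; simp) hma
                exact ⟨hEab, hne1,
                  ⟨hEab, fun h' hh => by
                    rw [hma] at hh; injection hh with hh; subst hh
                    exact hr1b a b u hab hadj h⟩,
                  Or.inr ⟨rb, hrb, hwb'⟩⟩
            exact ⟨u, hadj, hlt, rfl⟩
      obtain ⟨c, hac, hcb, hmc⟩ := hmain
      refine ⟨c, hcb, hac.symm, ?_, ?_, ?_, ?_⟩
      · -- M (c,1) = some (c,2)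
        exact hr2loc c (a, 0) hmc (by simp)
      · -- M (c,0) ≠ some (a,1)
        intro hcon
        rcases hwa with rfl | ⟨z, hz, rfl⟩
        · exact I.uq_one_unique hM (huq a 1) (by simp) hcon hra
        · by_cases hzc : z = c
          · subst hzc
            exact absurd (lt_of_lt_of_le hcb hz) (lt_irrefl _)
          · exact I.uq_one_unique hM (huq a 1)
              (by simp [Prod.ext_iff, Ne.symm hzc]) hcon hra
      · -- occupant of h2^a is worse than r1^c
        refine ⟨ra, hra, ?_⟩
        rcases hwa with rfl | ⟨z, hz, rfl⟩
        · exact Or.inl rfl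
        · exact Or.inr ⟨z, lt_of_lt_of_le hcb hz, rfl⟩
      · -- occupant of h2^c is r1^a with a ≥ a
        exact ⟨(a, 0), hmc, Or.inr ⟨a, le_rfl, rfl⟩⟩
    -- no chain exists
    have hnoR : ∀ N a b, (Finset.univ.filter (fun z => z < a)).card +
        (Finset.univ.filter (fun z => z < b)).card < N → ¬ RChain G M a b := by
      intro N
      induction N with
      | zero => intro a b h; omega
      | succ N ih =>
        intro a b hN hR
        obtain ⟨c, hcb, hRc⟩ := hstep a b hR
        exact ih c a (by have := hrk hcb; omega) hRc
    -- the set of vertices whose r3 is unmatched is a vertex cover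
    have hTcov : ∀ u w, G.Adj u w →
        u ∈ Finset.univ.filter (fun v => M (v, 2) = none) ∨
        w ∈ Finset.univ.filter (fun v => M (v, 2) = none) := by
      intro u w hadj
      by_contra hcon
      push_neg at hcon
      obtain ⟨hu, hw⟩ := hcon
      simp only [Finset.mem_filter, Finset.mem_univ, true_and] at hu hw
      have hmu : M (u, 2) = some (u, 1) := by
        cases hmu : M (u, 2) with
        | none => exact absurd hmu hu
        | some h => exact congrArg some (hopt3 M hM u h hmu)
      have hmw : M (w, 2) = some (w, 1) := by
        cases hmw : M (w, 2) with
        | none => exact absurd hmw hw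
        | some h => exact congrArg some (hopt3 M hM w h hmw)
      have hbase : RChain G M u w := by
        refine ⟨hadj, ?_, ?_, ?_, ?_⟩
        · exact hr2loc u (u, 2) hmu (by simp)
        · intro hcon2
          exact I.uq_one_unique hM (huq w 1) (by simp) hcon2 hmw
        · exact ⟨(w, 2), hmw, Or.inl rfl⟩
        · exact ⟨(u, 2), hmu, Or.inl rfl⟩
      exact hnoR _ u w (Nat.lt_succ_self _) hbase
    -- size bound
    set T := Finset.univ.filter (fun v => M (v, 2) = none) with hT
    have himg : ((fun v : V => ((v, 2) : V × Fin 3)) '' ↑T).ncard = T.card := by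
      rw [Set.ncard_image_of_injective _
        (fun a b hab => (Prod.ext_iff.mp hab).1), Set.ncard_coe_finset]
    have hsub : {r | M r ≠ none} ⊆ ((fun v : V => ((v, 2) : V × Fin 3)) '' ↑T)ᶜ := by
      rintro r hr ⟨v, hvT, rfl⟩
      rw [hT] at hvT
      simp only [Finset.mem_coe, Finset.mem_filter, Finset.mem_univ, true_and] at hvT
      exact hr hvT
    have hcompl := Set.ncard_add_ncard_compl ((fun v : V => ((v, 2) : V × Fin 3)) '' ↑T)
    rw [hcard3, himg] at hcompl
    have hsz : HRLQ.msize M ≤ 3 * Fintype.card V - T.card := by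
      have := Set.ncard_le_ncard hsub (Set.toFinite _)
      rw [HRLQ.msize]
      omega
    have hinf : sInf {c | ∃ S : Finset V, S.card = c ∧
        ∀ u w, G.Adj u w → u ∈ S ∨ w ∈ S} ≤ T.card :=
      Nat.sInf_le ⟨T, rfl, hTcov⟩
    omega
  -- combine
  obtain ⟨M₀, hM₀, hF₀, hRS₀, hsz₀⟩ := hA S₀ hS₀cov
  have hmem : 3 * Fintype.card V - sInf {c | ∃ S : Finset V, S.card = c ∧
      ∀ u w, G.Adj u w → u ∈ S ∨ w ∈ S} ∈
      {n | ∃ M, I.IsMatching M ∧ I.Feasible M ∧ I.RelaxedStable M ∧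
        HRLQ.msize M = n} := ⟨M₀, hM₀, hF₀, hRS₀, by rw [hsz₀, hS₀card]⟩
  apply le_antisymm
  · exact csSup_le ⟨_, hmem⟩ hB
  · apply le_csSup ?_ hmem
    refine ⟨3 * Fintype.card V, ?_⟩
    rintro x ⟨M, _, _, _, rfl⟩
    have h1 : {r | M r ≠ none}.ncard ≤ (Set.univ : Set (V × Fin 3)).ncard :=
      Set.ncard_le_ncard (Set.subset_univ _) Set.finite_univ
    rw [Set.ncard_univ, hcard3] at h1
    exact h1
end

section
/- In a graph G=(V,E) with |V|=n, |E|=m, construct the HRLQ instance G' with, for each vertex v_i: a set H_i of q_i = |E_i|+1 hospitals each with quotas [0,1] and preference list r_i followed by the edge-residents of edges incident on v_i; a vertex-resident r_i with list H_i followed by X; for every edge e_j an edge-resident r'_j listing H_{j1} then H_{j2} (the hospital sets of its endpoints); and k hospitals X = {x_1,…,x_k} each with quotas [1,1] listing all vertex-residents. Then G has an independent set of size k if and only if G' admits a feasible envy-free matching of size m+n. -/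
open Classical in
lemma gs_exists {A B : Type} [Fintype A] [Fintype B]
    (ra : A → B → ℕ) (rb : B → A → ℕ)
    (hra : ∀ a, Function.Injective (ra a)) (hrb : ∀ b, Function.Injective (rb b))
    (hcard : Fintype.card A ≤ Fintype.card B) :
    ∃ f : A → B, Function.Injective f ∧
      ∀ a b, ra a b < ra a (f a) → ∃ a', f a' = b ∧ rb b a' < rb b a := by
  classical
  rcases isEmpty_or_nonempty A with hA | hA
  · refine ⟨fun a => isEmptyElim a, fun a => isEmptyElim a, fun a => isEmptyElim a⟩
  -- invariant
  set Inv : (A → Finset B) → Prop := fun rej =>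
    ∀ a b, b ∈ rej a → ∃ a', b ∉ rej a' ∧ (∀ b', b' ∉ rej a' → ra a' b ≤ ra a' b')
      ∧ rb b a' < rb b a with hInv
  have nonuniv : ∀ rej, Inv rej → ∀ a, rej a ≠ Finset.univ := by
    intro rej hinv a hall
    -- every b has a pointer
    have hw : ∀ b : B, ∃ a', b ∉ rej a' ∧ (∀ b', b' ∉ rej a' → ra a' b ≤ ra a' b') := by
      intro b
      obtain ⟨a', h1, h2, _⟩ := hinv a b (hall ▸ Finset.mem_univ b)
      exact ⟨a', h1, h2⟩
    choose w hw1 hw2 using hw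
    have winj : Function.Injective w := by
      intro b1 b2 hb
      have h1 := hw2 b1 b2 (hb ▸ hw1 b2)
      have h2 := hw2 b2 b1 (hb ▸ hw1 b1)
      rw [hb] at h1
      exact hra _ (le_antisymm h1 h2)
    have : a ∉ Set.range w := by
      rintro ⟨b, rfl⟩
      exact hw1 b (hall ▸ Finset.mem_univ b)
    exact absurd hcard (not_le.mpr (Fintype.card_lt_of_injective_of_notMem w winj this))
  -- main induction on the measure
  suffices H : ∀ n (rej : A → Finset B), Inv rej →
      (∑ a : A, (Finset.univ \ rej a).card) ≤ n → ∃ f : A → B, Function.Injective f ∧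
      ∀ a b, ra a b < ra a (f a) → ∃ a', f a' = b ∧ rb b a' < rb b a by
    exact H _ (fun _ => ∅) (by intro a b hb; simp at hb) le_rfl
  intro n
  induction n with
  | zero =>
    intro rej hinv hsum
    exfalso
    obtain ⟨a⟩ := hA
    have h1 : (Finset.univ \ rej a).card = 0 := by
      have : (Finset.univ \ rej a).card ≤ ∑ a : A, (Finset.univ \ rej a).card := by
        simpa using Finset.single_le_sum (f := fun x => (Finset.univ \ rej x).card)
          (fun _ _ => Nat.zero_le _) (Finset.mem_univ a)
      omega
    have : rej a = Finset.univ := by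
      have h2 : (Finset.univ \ rej a).card = (Finset.univ : Finset B).card - (rej a).card := Finset.card_sdiff_of_subset (Finset.subset_univ (rej a))
      have h2b : (rej a).card ≤ (Finset.univ : Finset B).card := Finset.card_le_card (Finset.subset_univ _)
      have h3 : (rej a).card = (Finset.univ : Finset B).card := by omega
      exact Finset.eq_univ_of_card _ h3
    exact nonuniv rej hinv a this
  | succ n ih =>
    intro rej hinv hsum
    have hne : ∀ a, rej a ≠ Finset.univ := nonuniv rej hinv
    -- current proposal targets
    have hbest : ∀ a : A, ∃ b, b ∉ rej a ∧ ∀ b', b' ∉ rej a → ra a b ≤ ra a b' := by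
      intro a
      have : (Finset.univ \ rej a).Nonempty := by
        rw [Finset.sdiff_nonempty]
        intro h
        exact hne a (Finset.univ_subset_iff.mp h)
      obtain ⟨b, hb, hmin⟩ := Finset.exists_min_image _ (ra a) this
      refine ⟨b, (Finset.mem_sdiff.mp hb).2, fun b' h => hmin b' ?_⟩
      exact Finset.mem_sdiff.mpr ⟨Finset.mem_univ b', h⟩
    choose cur hcur1 hcur2 using hbest
    -- uniqueness of min: anyone "min-pointing" at b has cur = b
    have curuniq : ∀ a b, b ∉ rej a → (∀ b', b' ∉ rej a → ra a b ≤ ra a b') → cur a = b := by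
      intro a b h1 h2
      exact hra a (le_antisymm (hcur2 a b h1) (h2 _ (hcur1 a)))
    by_cases hinj : Function.Injective cur
    · refine ⟨cur, hinj, ?_⟩
      intro a b hlt
      have hbrej : b ∈ rej a := by
        by_contra h
        exact absurd (hcur2 a b h) (not_le.mpr hlt)
      obtain ⟨a', h1, h2, h3⟩ := hinv a b hbrej
      exact ⟨a', curuniq a' b h1 h2, h3⟩
    · -- perform one round of rejections
      set cond : A → Prop := fun a => ∃ a', cur a' = cur a ∧ rb (cur a) a' < rb (cur a) a
        with hcond
      set rej' : A → Finset B := fun a => if cond a then insert (cur a) (rej a) else rej a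
        with hrej'
      have hsub : ∀ a, rej a ⊆ rej' a := by
        intro a
        simp only [hrej']
        split
        · exact Finset.subset_insert _ _
        · exact Finset.Subset.refl _
      -- best pointer at a hospital survives
      have hstar : ∀ b a0, cur a0 = b → ∃ a', b ∉ rej' a' ∧ cur a' = b ∧
          (∀ b', b' ∉ rej' a' → ra a' b ≤ ra a' b') ∧ rb b a' ≤ rb b a0 := by
        intro b a0 ha0
        have hne' : (Finset.univ.filter (fun x => cur x = b)).Nonempty :=
          ⟨a0, by simp [ha0]⟩
        obtain ⟨astar, hmem0, hmin0⟩ := Finset.exists_min_image _ (rb b) hne'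
        have hmem : cur astar = b := (Finset.mem_filter.mp hmem0).2
        have hmin : ∀ x, cur x = b → rb b astar ≤ rb b x := fun x hx =>
          hmin0 x (Finset.mem_filter.mpr ⟨Finset.mem_univ _, hx⟩)
        have hnotcond : ¬ cond astar := by
          rintro ⟨a'', h1, h2⟩
          rw [hmem] at h1 h2
          exact absurd (hmin a'' h1) (not_le.mpr h2)
        have heq : rej' astar = rej astar := by simp [hrej', hnotcond]
        refine ⟨astar, ?_, hmem, ?_, hmin a0 ha0⟩
        · rw [heq, ← hmem]; exact hcur1 astar
        · intro b' hb'
          rw [heq] at hb'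
          rw [← hmem]
          exact hcur2 astar b' hb'
      have hinv' : Inv rej' := by
        intro a b hb
        simp only [hrej'] at hb
        by_cases hc : cond a
        · rw [if_pos hc] at hb
          rcases Finset.mem_insert.mp hb with rfl | hb
          · obtain ⟨a'', h1, h2⟩ := hc
            obtain ⟨a', s1, s2, s3, s4⟩ := hstar (cur a) a'' h1
            exact ⟨a', s1, s3, lt_of_le_of_lt s4 h2⟩
          · obtain ⟨a', h1, h2, h3⟩ := hinv a b hb
            have : cur a' = b := curuniq a' b h1 h2
            obtain ⟨a2, s1, s2, s3, s4⟩ := hstar b a' this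
            exact ⟨a2, s1, s3, lt_of_le_of_lt s4 h3⟩
        · rw [if_neg hc] at hb
          obtain ⟨a', h1, h2, h3⟩ := hinv a b hb
          have : cur a' = b := curuniq a' b h1 h2
          obtain ⟨a2, s1, s2, s3, s4⟩ := hstar b a' this
          exact ⟨a2, s1, s3, lt_of_le_of_lt s4 h3⟩
      -- measure decreases
      have hdec : (∑ a : A, (Finset.univ \ rej' a).card) ≤ n := by
        obtain ⟨a1, a2, hc12, hne12⟩ : ∃ a1 a2, cur a1 = cur a2 ∧ a1 ≠ a2 := by
          simp only [Function.Injective, not_forall] at hinj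
          obtain ⟨a1, a2, h1, h2⟩ := hinj
          exact ⟨a1, a2, h1, h2⟩
        -- one of a1, a2 gets rejected
        have hx : ∃ a0, cond a0 := by
          rcases lt_or_gt_of_ne (fun h => hne12 (hrb (cur a1) h) :
              rb (cur a1) a1 ≠ rb (cur a1) a2) with h | h
          · exact ⟨a2, a1, by rw [← hc12], by rw [← hc12]; exact h⟩
          · exact ⟨a1, a2, hc12.symm, h⟩
        obtain ⟨a0, hc0⟩ := hx
        have hlt : (Finset.univ \ rej' a0).card < (Finset.univ \ rej a0).card := by
          apply Finset.card_lt_card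
          constructor
          · exact Finset.sdiff_subset_sdiff le_rfl (hsub a0)
          · intro hss
            have : cur a0 ∈ Finset.univ \ rej a0 :=
              Finset.mem_sdiff.mpr ⟨Finset.mem_univ _, hcur1 a0⟩
            have h9 := (Finset.mem_sdiff.mp (hss this)).2
            apply h9
            simp only [hrej', if_pos hc0]
            exact Finset.mem_insert_self _ _
        have hall : ∀ a, (Finset.univ \ rej' a).card ≤ (Finset.univ \ rej a).card :=
          fun a => Finset.card_le_card (Finset.sdiff_subset_sdiff le_rfl (hsub a))
        have := Finset.sum_lt_sum (fun a _ => hall a) ⟨a0, Finset.mem_univ a0, hlt⟩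
        omega
      exact ih rej' hinv' hdec

/-- Reduction from Independent Set to MAXEFM with all quotas at most one: G has an
independent set of size k iff the reduced HRLQ instance (with hospital sets
Hᵢ of size |Eᵢ|+1 with quotas [0,1] per vertex, vertex-residents listing Hᵢ then
X, edge-residents listing the two endpoint hospital sets blockwise, and k
hospitals X with quotas [1,1] listing all vertex-residents) admits a feasible
envy-free matching of size m + n. -/
theorem ind_set_iff_envy_free_unit_quotas
    {V : Type} [Fintype V] [DecidableEq V]
    (G : SimpleGraph V) [DecidableRel G.Adj] (k : ℕ)
    (I : HRLQ (V ⊕ {e : Sym2 V // e ∈ G.edgeSet})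
              ((Σ v : V, Fin (G.degree v + 1)) ⊕ Fin k))
    (hstrict : I.StrictPrefs)
    -- acceptability structure
    (hE1 : ∀ v u (t : Fin (G.degree u + 1)),
      I.E (Sum.inl v) (Sum.inl ⟨u, t⟩) ↔ u = v)
    (hE2 : ∀ v (j : Fin k), I.E (Sum.inl v) (Sum.inr j))
    (hE3 : ∀ (e : {e : Sym2 V // e ∈ G.edgeSet}) u (t : Fin (G.degree u + 1)),
      I.E (Sum.inr e) (Sum.inl ⟨u, t⟩) ↔ u ∈ e.1)
    (hE4 : ∀ (e : {e : Sym2 V // e ∈ G.edgeSet}) (j : Fin k),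
      ¬ I.E (Sum.inr e) (Sum.inr j))
    -- vertex-resident v lists all of H_v before all of X
    (hr1 : ∀ v (t : Fin (G.degree v + 1)) (j : Fin k),
      I.rPref (Sum.inl v) (Sum.inl ⟨v, t⟩) < I.rPref (Sum.inl v) (Sum.inr j))
    -- edge-resident e lists the hospital set of one endpoint entirely before the other
    (hr2 : ∀ (e : {e : Sym2 V // e ∈ G.edgeSet}) u w, u ∈ e.1 → w ∈ e.1 → u ≠ w →
      (∀ (t : Fin (G.degree u + 1)) (t' : Fin (G.degree w + 1)),
        I.rPref (Sum.inr e) (Sum.inl ⟨u, t⟩) < I.rPref (Sum.inr e) (Sum.inl ⟨w, t'⟩)) ∨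
      (∀ (t : Fin (G.degree w + 1)) (t' : Fin (G.degree u + 1)),
        I.rPref (Sum.inr e) (Sum.inl ⟨w, t⟩) < I.rPref (Sum.inr e) (Sum.inl ⟨u, t'⟩)))
    -- every hospital in H_v prefers r_v to the incident edge-residents
    (hh : ∀ v (t : Fin (G.degree v + 1)) (e : {e : Sym2 V // e ∈ G.edgeSet}),
      v ∈ e.1 →
      I.hPref (Sum.inl ⟨v, t⟩) (Sum.inl v) < I.hPref (Sum.inl ⟨v, t⟩) (Sum.inr e))
    -- quotas
    (hq1 : ∀ v (t : Fin (G.degree v + 1)),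
      I.lq (Sum.inl ⟨v, t⟩) = 0 ∧ I.uq (Sum.inl ⟨v, t⟩) = 1)
    (hq2 : ∀ j : Fin k, I.lq (Sum.inr j) = 1 ∧ I.uq (Sum.inr j) = 1) :
    (∃ S : Finset V, S.card = k ∧ ∀ u ∈ S, ∀ w ∈ S, ¬ G.Adj u w) ↔
    (∃ M, I.IsMatching M ∧ I.Feasible M ∧ I.EnvyFree M ∧
      HRLQ.msize M = G.edgeFinset.card + Fintype.card V) := by
  classical
  constructor
  · -- Forward: independent set gives envy-free matching
    rintro ⟨S, hScard, hSind⟩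
    -- endpoints of edges with the preferred endpoint first
    have hends : ∀ e : {e : Sym2 V // e ∈ G.edgeSet}, ∃ u w : V, u ∈ e.1 ∧ w ∈ e.1 ∧ u ≠ w ∧
        (∀ z, z ∈ e.1 → z = u ∨ z = w) ∧
        (∀ (t : Fin (G.degree u + 1)) (t' : Fin (G.degree w + 1)),
          I.rPref (Sum.inr e) (Sum.inl ⟨u, t⟩) < I.rPref (Sum.inr e) (Sum.inl ⟨w, t'⟩)) := by
      rintro ⟨ev, he⟩
      revert he
      induction ev using Sym2.ind with
      | _ x y =>
        intro he
        have hadj : G.Adj x y := G.mem_edgeSet.mp he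
        have hne : x ≠ y := hadj.ne
        have hx : x ∈ (⟨s(x,y), he⟩ : {e : Sym2 V // e ∈ G.edgeSet}).1 := Sym2.mem_mk_left x y
        have hy : y ∈ (⟨s(x,y), he⟩ : {e : Sym2 V // e ∈ G.edgeSet}).1 := Sym2.mem_mk_right x y
        have hmem : ∀ z, z ∈ (⟨s(x,y), he⟩ : {e : Sym2 V // e ∈ G.edgeSet}).1 → z = x ∨ z = y :=
          fun z hz => Sym2.mem_iff.mp hz
        rcases hr2 ⟨s(x,y), he⟩ x y hx hy hne with h | h
        · exact ⟨x, y, hx, hy, hne, hmem, h⟩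
        · exact ⟨y, x, hy, hx, hne.symm, fun z hz => (hmem z hz).symm, h⟩
    choose pe oe hpe hoe hpne hpall hpblock using hends
    set asg : {e : Sym2 V // e ∈ G.edgeSet} → V := fun e => if pe e ∈ S then oe e else pe e
      with hasg
    have hasgmem : ∀ e, asg e ∈ e.1 := by
      intro e
      rw [hasg]
      dsimp only
      split
      · exact hoe e
      · exact hpe e
    have hedge : ∀ e : {e : Sym2 V // e ∈ G.edgeSet}, G.Adj (pe e) (oe e) := by
      intro e
      have he : e.1 = s(pe e, oe e) := (Sym2.mem_and_mem_iff (hpne e)).mp ⟨hpe e, hoe e⟩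
      exact G.mem_edgeSet.mp (he ▸ e.2)
    have hasgS : ∀ e, asg e ∉ S := by
      intro e hc
      rw [hasg] at hc
      dsimp only at hc
      by_cases h : pe e ∈ S
      · rw [if_pos h] at hc
        exact hSind (pe e) h (oe e) hc (hedge e)
      · rw [if_neg h] at hc
        exact h hc
    have hasgpe : ∀ e, pe e ∉ S → asg e = pe e := by
      intro e h
      rw [hasg]
      dsimp only
      rw [if_neg h]
    -- the market of the X hospitals
    obtain ⟨fX, hfXinj, hfXst⟩ :=
      gs_exists (A := ↥S) (B := Fin k)
        (fun v j => I.rPref (Sum.inl v.1) (Sum.inr j))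
        (fun j v => I.hPref (Sum.inr j) (Sum.inl v.1))
        (fun v j j' hjj => Sum.inr.inj (hstrict.1 (Sum.inl v.1) hjj))
        (fun j v v' hvv => Subtype.ext (Sum.inl.inj (hstrict.2 (Sum.inr j) hvv)))
        (by rw [Fintype.card_coe, hScard, Fintype.card_fin])
    have hfXsurj : Function.Surjective fX :=
      ((Fintype.bijective_iff_injective_and_card fX).mpr
        ⟨hfXinj, by rw [Fintype.card_coe, hScard, Fintype.card_fin]⟩).2
    -- the per-vertex block markets
    have hfBex : ∀ v : V,
        ∃ f : (Unit ⊕ {e : {e : Sym2 V // e ∈ G.edgeSet} // asg e = v}) → Fin (G.degree v + 1),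
        Function.Injective f ∧ ∀ a t,
          I.rPref (Sum.elim (fun _ => (Sum.inl v : V ⊕ {e : Sym2 V // e ∈ G.edgeSet}))
            (fun e => Sum.inr e.1) a) (Sum.inl ⟨v, t⟩) <
          I.rPref (Sum.elim (fun _ => (Sum.inl v : V ⊕ {e : Sym2 V // e ∈ G.edgeSet}))
            (fun e => Sum.inr e.1) a) (Sum.inl ⟨v, f a⟩) →
          ∃ a', f a' = t ∧
            I.hPref (Sum.inl ⟨v, t⟩) (Sum.elim (fun _ => (Sum.inl v : V ⊕ {e : Sym2 V // e ∈ G.edgeSet}))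
              (fun e => Sum.inr e.1) a') <
            I.hPref (Sum.inl ⟨v, t⟩) (Sum.elim (fun _ => (Sum.inl v : V ⊕ {e : Sym2 V // e ∈ G.edgeSet}))
              (fun e => Sum.inr e.1) a) := by
      intro v
      have hι : Function.Injective (Sum.elim (fun _ : Unit => (Sum.inl v : V ⊕ {e : Sym2 V // e ∈ G.edgeSet}))
          (fun e : {e : {e : Sym2 V // e ∈ G.edgeSet} // asg e = v} => Sum.inr e.1)) := by
        rintro (⟨⟩ | e1) (⟨⟩ | e2) hh12
        · rfl
        · exact absurd hh12 (by simp)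
        · exact absurd hh12 (by simp)
        · simp only [Sum.elim_inr] at hh12
          rw [Subtype.ext (Sum.inr.inj hh12)]
      refine gs_exists _ _ ?_ ?_ ?_
      · intro a t t' htt
        have h2 := Sum.inl.inj (hstrict.1 _ htt)
        exact eq_of_heq (Sigma.mk.inj_iff.mp h2).2
      · intro t a a' haa
        exact hι (hstrict.2 _ haa)
      · have h1 : Fintype.card {e : {e : Sym2 V // e ∈ G.edgeSet} // asg e = v} ≤ G.degree v := by
          have h2 := Fintype.card_le_of_injective
            (fun e : {e : {e : Sym2 V // e ∈ G.edgeSet} // asg e = v} =>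
              (⟨e.1.1, by rw [SimpleGraph.mem_incidenceFinset]; have h9 := hasgmem e.1; rw [e.2] at h9; exact ⟨e.1.2, h9⟩⟩ :
                ↥(G.incidenceFinset v)))
            (by
              rintro ⟨⟨e1, p1⟩, q1⟩ ⟨⟨e2, p2⟩, q2⟩ hh12
              simp only [Subtype.mk.injEq] at hh12 ⊢
              exact hh12)
          rwa [Fintype.card_coe, G.card_incidenceFinset_eq_degree] at h2
        simp only [Fintype.card_sum, Fintype.card_unit, Fintype.card_fin]
        omega
    choose fB hfBinj hfBst using hfBex
    -- the matching
    set M : (V ⊕ {e : Sym2 V // e ∈ G.edgeSet}) → Option ((Σ v : V, Fin (G.degree v + 1)) ⊕ Fin k) :=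
      Sum.elim
        (fun v => if hv : v ∈ S then some (Sum.inr (fX ⟨v, hv⟩))
          else some (Sum.inl ⟨v, fB v (Sum.inl ())⟩))
        (fun e => some (Sum.inl ⟨asg e, fB (asg e) (Sum.inr ⟨e, rfl⟩)⟩)) with hM
    have hMv1 : ∀ v (hv : v ∈ S), M (Sum.inl v) = some (Sum.inr (fX ⟨v, hv⟩)) := by
      intro v hv
      rw [hM, Sum.elim_inl, dif_pos hv]
    have hMv2 : ∀ v, v ∉ S → M (Sum.inl v) = some (Sum.inl ⟨v, fB v (Sum.inl ())⟩) := by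
      intro v hv
      rw [hM, Sum.elim_inl, dif_neg hv]
    have hMe : ∀ e, M (Sum.inr e) = some (Sum.inl ⟨asg e, fB (asg e) (Sum.inr ⟨e, rfl⟩)⟩) := by
      intro e
      rw [hM, Sum.elim_inr]
    have hallM : ∀ r, M r ≠ none := by
      rintro (v | e) hc
      · by_cases hv : v ∈ S
        · rw [hMv1 v hv] at hc; exact Option.some_ne_none _ hc
        · rw [hMv2 v hv] at hc; exact Option.some_ne_none _ hc
      · rw [hMe e] at hc; exact Option.some_ne_none _ hc
    have hX : ∀ r j, M r = some (Sum.inr j) → ∃ v : V, ∃ hv : v ∈ S, r = Sum.inl v ∧ fX ⟨v, hv⟩ = j := by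
      rintro (v | e) j hr
      · by_cases hv : v ∈ S
        · rw [hMv1 v hv] at hr
          exact ⟨v, hv, rfl, Sum.inr.inj (Option.some.inj hr)⟩
        · rw [hMv2 v hv] at hr
          exact absurd (Option.some.inj hr) (by simp)
      · rw [hMe e] at hr
        exact absurd (Option.some.inj hr) (by simp)
    have hB : ∀ r u (t : Fin (G.degree u + 1)), M r = some (Sum.inl ⟨u, t⟩) →
        ∃ a : Unit ⊕ {e : {e : Sym2 V // e ∈ G.edgeSet} // asg e = u},
          Sum.elim (fun _ => (Sum.inl u : V ⊕ {e : Sym2 V // e ∈ G.edgeSet}))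
            (fun e => Sum.inr e.1) a = r ∧ fB u a = t := by
      rintro (v | e) u t hr
      · by_cases hv : v ∈ S
        · rw [hMv1 v hv] at hr
          exact absurd (Option.some.inj hr) (by simp)
        · rw [hMv2 v hv] at hr
          have h2 := Sum.inl.inj (Option.some.inj hr)
          have h3 : v = u := (Sigma.mk.inj_iff.mp h2).1
          subst h3
          exact ⟨Sum.inl (), rfl, eq_of_heq (Sigma.mk.inj_iff.mp h2).2⟩
      · rw [hMe e] at hr
        have h2 := Sum.inl.inj (Option.some.inj hr)
        have h3 : asg e = u := (Sigma.mk.inj_iff.mp h2).1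
        subst h3
        exact ⟨Sum.inr ⟨e, rfl⟩, rfl, eq_of_heq (Sigma.mk.inj_iff.mp h2).2⟩
    have huniq : ∀ h r r', M r = some h → M r' = some h → r = r' := by
      rintro (⟨u, t⟩ | j) r r' h1 h2
      · obtain ⟨a, ha1, ha2⟩ := hB r u t h1
        obtain ⟨a', hb1, hb2⟩ := hB r' u t h2
        have h3 : a = a' := hfBinj u (ha2.trans hb2.symm)
        rw [← ha1, ← hb1, h3]
      · obtain ⟨v, hv, rfl, hj⟩ := hX r j h1
        obtain ⟨v', hv', rfl, hj'⟩ := hX r' j h2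
        have h3 : (⟨v, hv⟩ : ↥S) = ⟨v', hv'⟩ := hfXinj (hj.trans hj'.symm)
        rw [Subtype.mk.injEq] at h3
        rw [h3]
    refine ⟨M, ⟨?_, ?_⟩, ?_, ?_, ?_⟩
    · -- matching respects acceptability
      rintro (v | e) (⟨u, t⟩ | j) hr
      · obtain ⟨a, ha1, ha2⟩ := hB _ u t hr
        rcases a with ⟨⟩ | ⟨e', he'⟩
        · simp only [Sum.elim_inl] at ha1
          exact (hE1 v u t).mpr (Sum.inl.inj ha1)
        · simp only [Sum.elim_inr] at ha1
          exact absurd ha1 (by simp)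
      · exact hE2 v j
      · obtain ⟨a, ha1, ha2⟩ := hB _ u t hr
        rcases a with ⟨⟩ | ⟨e', he'⟩
        · simp only [Sum.elim_inl] at ha1
          exact absurd ha1 (by simp)
        · simp only [Sum.elim_inr] at ha1
          have h4 := Sum.inr.inj ha1
          subst h4
          exact (hE3 e' u t).mpr (he' ▸ hasgmem e')
      · rw [hMe e] at hr
        exact absurd (Option.some.inj hr) (by simp)
    · -- upper quotas
      rintro (⟨u, t⟩ | j)
      · rw [(hq1 u t).2]
        rw [Set.ncard_le_one (Set.toFinite _)]
        intro r h1 r' h2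
        exact huniq _ r r' h1 h2
      · rw [(hq2 j).2]
        rw [Set.ncard_le_one (Set.toFinite _)]
        intro r h1 r' h2
        exact huniq _ r r' h1 h2
    · -- feasibility
      rintro (⟨u, t⟩ | j)
      · rw [(hq1 u t).1]
        exact Nat.zero_le _
      · rw [(hq2 j).1]
        obtain ⟨⟨v, hv⟩, hvj⟩ := hfXsurj j
        have hmem : Sum.inl v ∈ HRLQ.matchedTo M (Sum.inr j) := by
          show M (Sum.inl v) = some (Sum.inr j)
          rw [hMv1 v hv, hvj]
        exact (Set.ncard_pos (Set.toFinite _)).mpr ⟨_, hmem⟩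
    · -- envy-freeness
      rintro r r' ⟨h, hMr', ⟨hEr, hpref⟩, hhp⟩
      rcases h with ⟨u, t⟩ | j
      · obtain ⟨a', ha1', ha2'⟩ := hB r' u t hMr'
        rcases r with v | e
        · have huv : u = v := (hE1 v u t).mp hEr
          subst huv
          by_cases hv : u ∈ S
          · rcases a' with ⟨⟩ | ⟨e', he'⟩
            · simp only [Sum.elim_inl] at ha1'
              rw [← ha1', hMv1 u hv] at hMr'
              exact absurd (Option.some.inj hMr') (by simp)
            · exact hasgS e' (by rw [he']; exact hv)
          · have hlt := hpref _ (hMv2 u hv)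
            obtain ⟨a2, hb1, hb2⟩ := hfBst u (Sum.inl ()) t hlt
            rcases a2 with ⟨⟩ | ⟨e', he'⟩
            · simp only [Sum.elim_inl] at hb2
              exact lt_irrefl _ hb2
            · simp only [Sum.elim_inr, Sum.elim_inl] at hb2
              exact absurd hb2 (not_lt.mpr (le_of_lt (hh u t e' (he' ▸ hasgmem e'))))
        · have hue : u ∈ e.1 := (hE3 e u t).mp hEr
          by_cases hua : u = asg e
          · subst hua
            have hlt := hpref _ (hMe e)
            obtain ⟨a2, hb1, hb2⟩ := hfBst (asg e) (Sum.inr ⟨e, rfl⟩) t hlt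
            have h3 : a2 = a' := hfBinj (asg e) (hb1.trans ha2'.symm)
            subst h3
            rw [ha1'] at hb2
            exact lt_asymm hhp hb2
          · rcases hpall e u hue with hupe | huoe
            · subst hupe
              have hpeS : pe e ∈ S := by
                by_contra hq
                exact hua (hasgpe e hq).symm
              rcases a' with ⟨⟩ | ⟨e', he'⟩
              · simp only [Sum.elim_inl] at ha1'
                rw [← ha1', hMv1 (pe e) hpeS] at hMr'
                exact absurd (Option.some.inj hMr') (by simp)
              · exact hasgS e' (by rw [he']; exact hpeS)
            · subst huoe
              have hape : asg e = pe e := by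
                rcases hpall e (asg e) (hasgmem e) with h4 | h4
                · exact h4
                · exact absurd h4.symm hua
              have key : ∀ (w : V), w = pe e → ∀ (t1 : Fin (G.degree w + 1)),
                  I.rPref (Sum.inr e) (Sum.inl ⟨w, t1⟩) < I.rPref (Sum.inr e) (Sum.inl ⟨oe e, t⟩) := by
                rintro w rfl t1
                exact hpblock e t1 t
              have hlt := hpref _ (hMe e)
              exact lt_asymm hlt (key (asg e) hape _)
      · obtain ⟨u, hu, rfl, hj⟩ := hX r' j hMr'
        rcases r with v | e
        · by_cases hv : v ∈ S
          · have hlt := hpref _ (hMv1 v hv)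
            obtain ⟨a', hb1, hb2⟩ := hfXst ⟨v, hv⟩ j hlt
            have h3 : a' = (⟨u, hu⟩ : ↥S) := hfXinj (hb1.trans hj.symm)
            rw [h3] at hb2
            exact lt_asymm hhp hb2
          · have hlt := hpref _ (hMv2 v hv)
            exact lt_asymm hlt (hr1 v _ j)
        · exact hE4 e j hEr
    · -- size
      have huniv : {r | M r ≠ none} = Set.univ := Set.eq_univ_of_forall (fun r => hallM r)
      show {r | M r ≠ none}.ncard = _
      rw [huniv, Set.ncard_univ, Nat.card_eq_fintype_card, Fintype.card_sum]
      have hcE : G.edgeFinset.card = Fintype.card {e : Sym2 V // e ∈ G.edgeSet} :=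
        (Set.toFinset_card _).trans (Fintype.card_congr (Equiv.refl _))
      omega
  · -- Backward: envy-free matching gives independent set
    rintro ⟨M, ⟨hME, hMuq⟩, hMf, hMef, hMsize⟩
    have hcardR : Fintype.card (V ⊕ {e : Sym2 V // e ∈ G.edgeSet}) =
        G.edgeFinset.card + Fintype.card V := by
      rw [Fintype.card_sum]
      have hcE : G.edgeFinset.card = Fintype.card {e : Sym2 V // e ∈ G.edgeSet} :=
        (Set.toFinset_card _).trans (Fintype.card_congr (Equiv.refl _))
      omega
    have h1 : {r | M r ≠ none}.ncard = G.edgeFinset.card + Fintype.card V := hMsize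
    have huniv : {r | M r ≠ none} = Set.univ := by
      apply Set.eq_of_subset_of_ncard_le (Set.subset_univ _) _ (Set.toFinite _)
      rw [Set.ncard_univ, Nat.card_eq_fintype_card, hcardR, h1]
    have hall : ∀ r, M r ≠ none := by
      intro r
      have h9 : r ∈ {r | M r ≠ none} := by rw [huniv]; exact Set.mem_univ r
      exact h9
    have hpick : ∀ j : Fin k, ∃ v : V, M (Sum.inl v) = some (Sum.inr j) := by
      intro j
      have h2 := hMf (Sum.inr j)
      rw [(hq2 j).1] at h2
      obtain ⟨r, hr⟩ := (Set.ncard_pos (Set.toFinite _)).mp (lt_of_lt_of_le zero_lt_one h2)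
      rcases r with v | e
      · exact ⟨v, hr⟩
      · exact absurd (hME _ _ hr) (hE4 e j)
    choose vj hvj using hpick
    have hvjinj : Function.Injective vj := by
      intro j j' hjj
      have h2 := (hvj j).symm.trans (hjj ▸ hvj j')
      exact Sum.inr.inj (Option.some.inj h2)
    refine ⟨Finset.image vj Finset.univ, ?_, ?_⟩
    · rw [Finset.card_image_of_injective _ hvjinj, Finset.card_univ, Fintype.card_fin]
    · intro u hu w hw hadj
      obtain ⟨ju, _, hju⟩ := Finset.mem_image.mp hu
      obtain ⟨jw, _, hjw⟩ := Finset.mem_image.mp hw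
      have hes : s(u, w) ∈ G.edgeSet := G.mem_edgeSet.mpr hadj
      obtain ⟨h, hMe⟩ : ∃ h, M (Sum.inr ⟨s(u, w), hes⟩) = some h := by
        cases hMeo : M (Sum.inr ⟨s(u, w), hes⟩) with
        | none => exact absurd hMeo (hall _)
        | some h => exact ⟨h, rfl⟩
      rcases h with ⟨z, t⟩ | j
      · have hz : z ∈ (⟨s(u, w), hes⟩ : {e : Sym2 V // e ∈ G.edgeSet}).1 :=
          (hE3 _ z t).mp (hME _ _ hMe)
        have hzS : ∃ j0, M (Sum.inl z) = some (Sum.inr j0) := by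
          rcases Sym2.mem_iff.mp hz with rfl | rfl
          · exact ⟨ju, hju ▸ hvj ju⟩
          · exact ⟨jw, hjw ▸ hvj jw⟩
        obtain ⟨j0, hj0⟩ := hzS
        apply hMef (Sum.inl z) (Sum.inr ⟨s(u, w), hes⟩)
        refine ⟨Sum.inl ⟨z, t⟩, hMe, ⟨(hE1 z z t).mpr rfl, ?_⟩, hh z t _ hz⟩
        intro h' hh'
        rw [hj0] at hh'
        cases Option.some.inj hh'
        exact hr1 z t j0
      · exact absurd (hME _ _ hMe) (hE4 _ j)
end

section
/- In a graph G=(V,E), construct the HRLQ instance G' with, for each vertex v_i with neighbors v_{j1},…,v_{jd}: residents r1^i (list: h1^i), r2^i (list: h2^i, h1^i, h3^i), r3^i (list: h4^i, h2^i, h1^{j1},…,h1^{jd}, h3^i) and hospitals h1^i [0,1] (list: r2^i, r3^{j1},…,r3^{jd}, r1^i), h2^i [0,1] (list: r2^i, r3^i), h3^i [1,1] (list: r3^i, r2^i), h4^i [0,1] (list: r3^i). Then the maximum size of a feasible envy-free matching in G' equals 3|V| minus the size of a minimum vertex cover of G. -/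
set_option maxHeartbeats 3000000 in
/-- Vertex cover reduction for MAXEFM: in the reduced HRLQ instance (residents
r1ⁱ,r2ⁱ,r3ⁱ and hospitals h1ⁱ,h2ⁱ,h3ⁱ,h4ⁱ per vertex vᵢ, with preference lists
r1ⁱ: h1ⁱ; r2ⁱ: h2ⁱ,h1ⁱ,h3ⁱ; r3ⁱ: h4ⁱ,h2ⁱ,h1-neighbors,h3ⁱ;
h1ⁱ [0,1]: r2ⁱ,r3-neighbors,r1ⁱ; h2ⁱ [0,1]: r2ⁱ,r3ⁱ; h3ⁱ [1,1]: r3ⁱ,r2ⁱ;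
h4ⁱ [0,1]: r3ⁱ, using a fixed global vertex ordering), the maximum size of a
feasible envy-free matching equals 3|V| minus the minimum size of a vertex
cover of G. -/
theorem max_envy_free_eq_vertex_cover
    {V : Type} [Fintype V] [LinearOrder V]
    (G : SimpleGraph V) [DecidableRel G.Adj]
    (I : HRLQ (V × Fin 3) (V × Fin 4))
    (hstrict : I.StrictPrefs)
    -- acceptability (resident indices: 0=r1,1=r2,2=r3; hospital: 0=h1,1=h2,2=h3,3=h4)
    (hE1 : ∀ v u (j : Fin 4), I.E (v, 0) (u, j) ↔ u = v ∧ j = 0)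
    (hE2 : ∀ v u (j : Fin 4), I.E (v, 1) (u, j) ↔ u = v ∧ (j = 1 ∨ j = 0 ∨ j = 2))
    (hE3 : ∀ v u (j : Fin 4), I.E (v, 2) (u, j) ↔
      (u = v ∧ (j = 3 ∨ j = 1 ∨ j = 2)) ∨ (G.Adj v u ∧ j = 0))
    -- r2ᵛ: h2ᵛ, h1ᵛ, h3ᵛ
    (hr2a : ∀ v, I.rPref (v, 1) (v, 1) < I.rPref (v, 1) (v, 0))
    (hr2b : ∀ v, I.rPref (v, 1) (v, 0) < I.rPref (v, 1) (v, 2))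
    -- r3ᵛ: h4ᵛ, h2ᵛ, the h1's of neighbors in the global order, h3ᵛ
    (hr3a : ∀ v, I.rPref (v, 2) (v, 3) < I.rPref (v, 2) (v, 1))
    (hr3b : ∀ v u, G.Adj v u → I.rPref (v, 2) (v, 1) < I.rPref (v, 2) (u, 0))
    (hr3c : ∀ v u w, G.Adj v u → G.Adj v w → u < w →
      I.rPref (v, 2) (u, 0) < I.rPref (v, 2) (w, 0))
    (hr3d : ∀ v u, G.Adj v u → I.rPref (v, 2) (u, 0) < I.rPref (v, 2) (v, 2))
    (hr3e : ∀ v, I.rPref (v, 2) (v, 1) < I.rPref (v, 2) (v, 2))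
    -- h1ᵛ: r2ᵛ, the r3's of neighbors in the global order, r1ᵛ
    (hh1a : ∀ v u, G.Adj v u → I.hPref (v, 0) (v, 1) < I.hPref (v, 0) (u, 2))
    (hh1b : ∀ v u w, G.Adj v u → G.Adj v w → u < w →
      I.hPref (v, 0) (u, 2) < I.hPref (v, 0) (w, 2))
    (hh1c : ∀ v u, G.Adj v u → I.hPref (v, 0) (u, 2) < I.hPref (v, 0) (v, 0))
    (hh1d : ∀ v, I.hPref (v, 0) (v, 1) < I.hPref (v, 0) (v, 0))
    -- h2ᵛ: r2ᵛ then r3ᵛ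
    (hh2 : ∀ v, I.hPref (v, 1) (v, 1) < I.hPref (v, 1) (v, 2))
    -- h3ᵛ: r3ᵛ then r2ᵛ
    (hh3 : ∀ v, I.hPref (v, 2) (v, 2) < I.hPref (v, 2) (v, 1))
    -- quotas: h3ᵛ has quotas [1,1], all others [0,1]
    (hlq : ∀ v (j : Fin 4), I.lq (v, j) = if j = 2 then 1 else 0)
    (huq : ∀ v (j : Fin 4), I.uq (v, j) = 1) :
    sSup {n | ∃ M, I.IsMatching M ∧ I.Feasible M ∧ I.EnvyFree M ∧
        HRLQ.msize M = n} =
      3 * Fintype.card V -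
        sInf {c | ∃ S : Finset V, S.card = c ∧
          ∀ u w, G.Adj u w → u ∈ S ∨ w ∈ S} := by
  
  classical
  have cardR : Nat.card (V × Fin 3) = 3 * Fintype.card V := by
    simp [Nat.card_eq_fintype_card]; ring
  -- Part 1: from a vertex cover, construct a feasible envy-free matching
  have key1 : ∀ S : Finset V, (∀ u w, G.Adj u w → u ∈ S ∨ w ∈ S) →
      ∃ M, I.IsMatching M ∧ I.Feasible M ∧ I.EnvyFree M ∧
        HRLQ.msize M = 3 * Fintype.card V - S.card := by
    intro S hS
    set M : V × Fin 3 → Option (V × Fin 4) := fun r =>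
      if r.1 ∈ S then
        if r.2 = 0 then none else if r.2 = 1 then some (r.1, 2) else some (r.1, 3)
      else
        if r.2 = 0 then some (r.1, 0) else if r.2 = 1 then some (r.1, 1)
        else some (r.1, 2) with hMdef
    have hMval : ∀ (v : V) (i : Fin 3) (h : V × Fin 4), M (v, i) = some h ↔
        ((v ∈ S ∧ ((i = 1 ∧ h = (v, 2)) ∨ (i = 2 ∧ h = (v, 3)))) ∨
         (v ∉ S ∧ ((i = 0 ∧ h = (v, 0)) ∨ (i = 1 ∧ h = (v, 1)) ∨
           (i = 2 ∧ h = (v, 2))))) := by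
      intro v i h
      fin_cases i <;> by_cases hv : v ∈ S <;>
        simp [hMdef, hv, eq_comm]
    have hMnone : ∀ (v : V) (i : Fin 3), M (v, i) = none ↔ v ∈ S ∧ i = 0 := by
      intro v i
      fin_cases i <;> by_cases hv : v ∈ S <;> simp [hMdef, hv]
    refine ⟨M, ⟨?_, ?_⟩, ?_, ?_, ?_⟩
    · rintro ⟨v, i⟩ h hMr
      rw [hMval] at hMr
      rcases hMr with ⟨hv, ⟨hi, hh⟩ | ⟨hi, hh⟩⟩ |
        ⟨hv, ⟨hi, hh⟩ | ⟨hi, hh⟩ | ⟨hi, hh⟩⟩ <;> subst hi <;> subst hh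
      · exact (hE2 v v 2).mpr ⟨rfl, Or.inr (Or.inr rfl)⟩
      · exact (hE3 v v 3).mpr (Or.inl ⟨rfl, Or.inl rfl⟩)
      · exact (hE1 v v 0).mpr ⟨rfl, rfl⟩
      · exact (hE2 v v 1).mpr ⟨rfl, Or.inl rfl⟩
      · exact (hE3 v v 2).mpr (Or.inl ⟨rfl, Or.inr (Or.inr rfl)⟩)
    · rintro ⟨u, j⟩
      rw [huq u j, Set.ncard_le_one (Set.toFinite _)]
      rintro ⟨v, i⟩ ha ⟨w, k⟩ hb
      simp only [HRLQ.matchedTo, Set.mem_setOf_eq] at ha hb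
      rw [hMval] at ha hb
      rcases ha with ⟨hv, ⟨hi, hh⟩ | ⟨hi, hh⟩⟩ |
          ⟨hv, ⟨hi, hh⟩ | ⟨hi, hh⟩ | ⟨hi, hh⟩⟩ <;>
        rcases hb with ⟨hw, ⟨hk, hh'⟩ | ⟨hk, hh'⟩⟩ |
          ⟨hw, ⟨hk, hh'⟩ | ⟨hk, hh'⟩ | ⟨hk, hh'⟩⟩ <;>
        simp_all [Prod.ext_iff]
    · rintro ⟨u, j⟩
      rw [hlq u j]
      by_cases hj : j = 2
      · subst hj
        simp only [reduceIte]
        rw [Nat.one_le_iff_ne_zero, ← Nat.pos_iff_ne_zero,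
          Set.ncard_pos (Set.toFinite _)]
        by_cases hu : u ∈ S
        · exact ⟨(u, 1), by rw [HRLQ.matchedTo, Set.mem_setOf_eq, hMval]; tauto⟩
        · exact ⟨(u, 2), by rw [HRLQ.matchedTo, Set.mem_setOf_eq, hMval]; tauto⟩
      · simp [hj]
    · rintro ⟨w, i⟩ ⟨u, j'⟩ ⟨h, hM', ⟨hEr, hpref⟩, hlt⟩
      rw [hMval] at hM'
      rcases hM' with ⟨hu, ⟨hj, hh⟩ | ⟨hj, hh⟩⟩ |
          ⟨hu, ⟨hj, hh⟩ | ⟨hj, hh⟩ | ⟨hj, hh⟩⟩ <;> subst hj <;> subst hh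
      · -- u ∈ S, occupant r2ᵘ at h3ᵘ = (u,2)
        fin_cases i
        · exact absurd ((hE1 w u 2).mp hEr).2 (by decide)
        · obtain ⟨rfl, -⟩ := (hE2 w u 2).mp hEr
          have := hpref (u, 2) (by rw [hMval]; tauto)
          exact lt_irrefl _ this
        · rcases (hE3 w u 2).mp hEr with ⟨rfl, -⟩ | ⟨-, habs⟩
          · have h1 := hpref (u, 3) (by rw [hMval]; tauto)
            exact absurd h1 (not_lt.mpr (le_of_lt ((hr3a u).trans (hr3e u))))
          · exact absurd habs (by decide)
      · -- u ∈ S, occupant r3ᵘ at h4ᵘ = (u,3)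
        fin_cases i
        · exact absurd ((hE1 w u 3).mp hEr).2 (by decide)
        · rcases ((hE2 w u 3).mp hEr).2 with h | h | h <;> exact absurd h (by decide)
        · rcases (hE3 w u 3).mp hEr with ⟨rfl, -⟩ | ⟨-, habs⟩
          · have := hpref (u, 3) (by rw [hMval]; tauto)
            exact lt_irrefl _ this
          · exact absurd habs (by decide)
      · -- u ∉ S, occupant r1ᵘ at h1ᵘ = (u,0)
        fin_cases i
        · obtain ⟨rfl, -⟩ := (hE1 w u 0).mp hEr
          have := hpref (u, 0) (by rw [hMval]; tauto)
          exact lt_irrefl _ this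
        · obtain ⟨rfl, -⟩ := (hE2 w u 0).mp hEr
          have h1 := hpref (u, 1) (by rw [hMval]; tauto)
          exact absurd h1 (not_lt.mpr (le_of_lt (hr2a u)))
        · rcases (hE3 w u 0).mp hEr with ⟨-, habs⟩ | ⟨hadj, -⟩
          · rcases habs with h | h | h <;> exact absurd h (by decide)
          · have hw : w ∈ S := (hS w u hadj).resolve_right hu
            have h1 := hpref (w, 3) (by rw [hMval]; tauto)
            exact absurd h1 (not_lt.mpr (le_of_lt ((hr3a w).trans (hr3b w u hadj))))
      · -- u ∉ S, occupant r2ᵘ at h2ᵘ = (u,1)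
        fin_cases i
        · exact absurd ((hE1 w u 1).mp hEr).2 (by decide)
        · obtain ⟨rfl, -⟩ := (hE2 w u 1).mp hEr
          have := hpref (u, 1) (by rw [hMval]; tauto)
          exact lt_irrefl _ this
        · rcases (hE3 w u 1).mp hEr with ⟨rfl, -⟩ | ⟨-, habs⟩
          · exact absurd hlt (not_lt.mpr (le_of_lt (hh2 u)))
          · exact absurd habs (by decide)
      · -- u ∉ S, occupant r3ᵘ at h3ᵘ = (u,2)
        fin_cases i
        · exact absurd ((hE1 w u 2).mp hEr).2 (by decide)
        · obtain ⟨rfl, -⟩ := (hE2 w u 2).mp hEr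
          have h1 := hpref (u, 1) (by rw [hMval]; tauto)
          exact absurd h1 (not_lt.mpr (le_of_lt ((hr2a u).trans (hr2b u))))
        · rcases (hE3 w u 2).mp hEr with ⟨rfl, -⟩ | ⟨-, habs⟩
          · have := hpref (u, 2) (by rw [hMval]; tauto)
            exact lt_irrefl _ this
          · exact absurd habs (by decide)
    · -- size computation
      have hset : {r : V × Fin 3 | M r = none} =
          (fun v => (v, (0 : Fin 3))) '' (S : Set V) := by
        ext ⟨v, i⟩
        simp only [Set.mem_setOf_eq, Set.mem_image, hMnone]
        constructor
        · rintro ⟨hv, rfl⟩; exact ⟨v, hv, rfl⟩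
        · rintro ⟨w, hw, heq⟩
          obtain ⟨rfl, rfl⟩ := Prod.mk.injEq .. ▸ heq
          exact ⟨hw, rfl⟩
      have hcardnone : {r : V × Fin 3 | M r = none}.ncard = S.card := by
        rw [hset, Set.ncard_image_of_injective _
          (fun a b hab => (Prod.mk.injEq .. ▸ hab).1), Set.ncard_coe_finset]
      have hcompl : {r : V × Fin 3 | M r ≠ none} = {r : V × Fin 3 | M r = none}ᶜ := by
        ext r; simp
      have hsum := Set.ncard_add_ncard_compl {r : V × Fin 3 | M r = none}
      have hle : S.card ≤ 3 * Fintype.card V := by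
        calc S.card ≤ Fintype.card V := S.card_le_univ
        _ ≤ 3 * Fintype.card V := by omega
      rw [HRLQ.msize, hcompl]
      omega
  -- Part 2: from a feasible envy-free matching, extract a vertex cover
  have key2 : ∀ M, I.IsMatching M → I.Feasible M → I.EnvyFree M →
      ∃ S : Finset V, (∀ u w, G.Adj u w → u ∈ S ∨ w ∈ S) ∧
        HRLQ.msize M ≤ 3 * Fintype.card V - S.card := by
    intro M hmatch hfeas hef
    set S : Finset V := Finset.univ.filter (fun v => ∃ i, M (v, i) = none) with hSdef
    have hstep : ∀ x, x ∉ S → M (x, 0) = some (x, 0) ∧ M (x, 2) = some (x, 2) := by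
      intro x hx
      have hall : ∀ i : Fin 3, M (x, i) ≠ none := by
        intro i hi
        exact hx (by simp [hSdef]; exact ⟨i, hi⟩)
      have hx0 : M (x, 0) = some (x, 0) := by
        obtain ⟨h, hh⟩ := Option.ne_none_iff_exists'.mp (hall 0)
        obtain ⟨u, j⟩ := h
        obtain ⟨rfl, rfl⟩ := (hE1 x u j).mp (hmatch.1 _ _ hh)
        exact hh
      refine ⟨hx0, ?_⟩
      -- h3ˣ is matched, to r2ˣ or r3ˣ
      have hfe := hfeas (x, 2)
      rw [hlq x 2, if_pos rfl] at hfe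
      have : (HRLQ.matchedTo M (x, 2)).Nonempty := by
        rw [← Set.ncard_pos (Set.toFinite _)]; omega
      obtain ⟨⟨w, i⟩, hw⟩ := this
      rw [HRLQ.matchedTo, Set.mem_setOf_eq] at hw
      have hEw := hmatch.1 _ _ hw
      fin_cases i
      · exact absurd ((hE1 w x 2).mp hEw).2 (by decide)
      · -- occupant r2ˣ : then r2ˣ envies r1ˣ at h1ˣ
        obtain ⟨rfl, -⟩ := (hE2 w x 2).mp hEw
        replace hw : M (x, 1) = some (x, 2) := hw
        exact absurd ⟨(x, 0), hx0,
          ⟨(hE2 x x 0).mpr ⟨rfl, Or.inr (Or.inl rfl)⟩,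
            fun h' hh' => by
              rw [hw] at hh'
              obtain rfl := (Option.some_inj.mp hh').symm
              exact hr2b x⟩, hh1d x⟩ (hef (x, 1) (x, 0))
      · rcases (hE3 w x 2).mp hEw with ⟨rfl, -⟩ | ⟨-, habs⟩
        · exact hw
        · exact absurd habs (by decide)
    refine ⟨S, ?_, ?_⟩
    · -- S is a vertex cover
      intro a b hab
      by_contra hcon
      push_neg at hcon
      obtain ⟨ha, hb⟩ := hcon
      obtain ⟨-, ha2⟩ := hstep a ha
      obtain ⟨hb0, -⟩ := hstep b hb
      exact absurd ⟨(b, 0), hb0,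
        ⟨(hE3 a b 0).mpr (Or.inr ⟨hab, rfl⟩),
          fun h' hh' => by
            rw [ha2] at hh'
            obtain rfl := (Option.some_inj.mp hh').symm
            exact hr3d a b hab⟩, hh1c b a hab.symm⟩ (hef (a, 2) (b, 0))
    · -- size bound
      have hcompl : {r : V × Fin 3 | M r ≠ none} = {r : V × Fin 3 | M r = none}ᶜ := by
        ext r; simp
      have hsum := Set.ncard_add_ncard_compl {r : V × Fin 3 | M r = none}
      have hinj : S.card ≤ {r : V × Fin 3 | M r = none}.ncard := by
        rw [Set.ncard_eq_toFinset_card']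
        have hch : ∀ v, v ∈ S → ∃ i, M (v, i) = none := by
          intro v hv; simpa [hSdef] using hv
        apply Finset.card_le_card_of_injOn
          (fun v => (v, if h : ∃ i, M (v, i) = none then h.choose else 0))
        · intro v hv
          simp only [Finset.mem_coe, Set.mem_toFinset, Set.mem_setOf_eq]
          rw [dif_pos (hch v hv)]
          exact (hch v hv).choose_spec
        · intro a ha b hb hab
          exact congrArg Prod.fst hab
      rw [HRLQ.msize, hcompl]
      omega
  -- wrap up
  set C := {c | ∃ S : Finset V, S.card = c ∧ ∀ u w, G.Adj u w → u ∈ S ∨ w ∈ S}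
    with hCdef
  have hCne : C.Nonempty :=
    ⟨Finset.univ.card, Finset.univ, rfl, fun u w _ => Or.inl (Finset.mem_univ u)⟩
  obtain ⟨S₀, hS₀card, hS₀cov⟩ := Nat.sInf_mem hCne
  obtain ⟨M₀, hM₀m, hM₀f, hM₀e, hM₀s⟩ := key1 S₀ hS₀cov
  set A := {n | ∃ M, I.IsMatching M ∧ I.Feasible M ∧ I.EnvyFree M ∧
    HRLQ.msize M = n} with hAdef
  have hmem : 3 * Fintype.card V - sInf C ∈ A := by
    exact ⟨M₀, hM₀m, hM₀f, hM₀e, by rw [hM₀s, hS₀card]⟩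
  have hub : ∀ n ∈ A, n ≤ 3 * Fintype.card V - sInf C := by
    rintro n ⟨M, hm, hf, he, rfl⟩
    obtain ⟨S, hcov, hsz⟩ := key2 M hm hf he
    have h1 : sInf C ≤ S.card := Nat.sInf_le ⟨S, rfl, hcov⟩
    exact hsz.trans (Nat.sub_le_sub_left h1 _)
  exact le_antisymm (csSup_le ⟨_, hmem⟩ hub) (le_csSup ⟨_, hub⟩ hmem)
end

section
/- In an HRLQ instance where every resident's preference list has length at most ℓ₁ and every hospital's preference list has length at most ℓ₂ (with arbitrary quotas), every maximal feasible envy-free matching M satisfies |OPT| ≤ ℓ₁·ℓ₂·|M|, where OPT is a maximum-size feasible envy-free matching. -/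
lemma ncard_eq_filter_card {α : Type} [Fintype α] (p : α → Prop) [DecidablePred p] :
    {x | p x}.ncard = (Finset.univ.filter p).card := by
  classical
  rw [Set.ncard_eq_toFinset_card']
  simp [Set.toFinset_setOf]

/-- In an HRLQ instance with resident lists of length at most ℓ₁ and hospital lists
of length at most ℓ₂ (arbitrary quotas), every maximal feasible envy-free matching
M is an (ℓ₁·ℓ₂)-approximation of a maximum-size feasible envy-free matching. -/
theorem maximal_envy_free_ell1_ell2_approx
    {R H : Type} [Fintype R] [Fintype H] [DecidableEq R] (I : HRLQ R H)
    (hstrict : I.StrictPrefs) (ℓ₁ ℓ₂ : ℕ)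
    (hlen₁ : ∀ r, {h | I.E r h}.ncard ≤ ℓ₁)
    (hlen₂ : ∀ h, {r | I.E r h}.ncard ≤ ℓ₂)
    (M : R → Option H)
    (hM : I.IsMatching M ∧ I.Feasible M ∧ I.EnvyFree M)
    (hmaximal : ∀ r h, M r = none → I.E r h →
      ¬ (I.IsMatching (Function.update M r (some h)) ∧
         I.EnvyFree (Function.update M r (some h)))) :
    ∀ OPT, I.IsMatching OPT → I.Feasible OPT → I.EnvyFree OPT →
      HRLQ.msize OPT ≤ ℓ₁ * ℓ₂ * HRLQ.msize M := by
  classical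
  intro OPT hOPTm hOPTf hOPTef
  obtain ⟨⟨hMedge, hMcap⟩, hMfeas, hMef⟩ := hM
  -- Key claim: for every hospital h matched in OPT, some M-matched resident finds h acceptable.
  have key : ∀ r h, OPT r = some h → ∃ s, M s ≠ none ∧ I.E s h := by
    intro r h hOPTr
    have hErh : I.E r h := hOPTm.1 r h hOPTr
    by_cases hMr : M r = none
    · by_contra hno
      push_neg at hno
      have hno' : ∀ s, M s ≠ none → ¬ I.E s h := by
        intro s hs hEs; exact hno s hs hEs
      -- set of unmatched residents finding h acceptable
      set U : Finset R := Finset.univ.filter (fun r' => M r' = none ∧ I.E r' h) with hU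
      have hrU : r ∈ U := by simp [hU, hMr, hErh]
      obtain ⟨r₀, hr₀U, hmin⟩ := U.exists_min_image (fun r' => I.hPref h r') ⟨r, hrU⟩
      have hM0 : M r₀ = none := ((Finset.mem_filter.mp hr₀U).2).1
      have hE0 : I.E r₀ h := ((Finset.mem_filter.mp hr₀U).2).2
      have hempty : HRLQ.matchedTo M h = ∅ := by
        ext s
        simp only [HRLQ.matchedTo, Set.mem_setOf_eq, Set.mem_empty_iff_false, iff_false]
        intro hs
        exact hno' s (by simp [hs]) (hMedge s h hs)
      refine hmaximal r₀ h hM0 hE0 ⟨⟨?_, ?_⟩, ?_⟩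
      · intro r' h' heq
        by_cases hr' : r' = r₀
        · subst hr'
          rw [Function.update_self] at heq
          obtain rfl : h = h' := by injection heq
          exact hE0
        · rw [Function.update_of_ne hr'] at heq
          exact hMedge r' h' heq
      · intro h'
        by_cases hh : h' = h
        · subst hh
          have hset : HRLQ.matchedTo (Function.update M r₀ (some h')) h' = {r₀} := by
            ext s
            simp only [HRLQ.matchedTo, Set.mem_setOf_eq, Set.mem_singleton_iff]
            constructor
            · intro hs
              by_contra hne
              rw [Function.update_of_ne hne] at hs
              have : s ∈ HRLQ.matchedTo M h' := hs
              rw [hempty] at this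
              exact this
            · intro hs; subst hs; rw [Function.update_self]
          rw [hset, Set.ncard_singleton]
          have h1 : r ∈ HRLQ.matchedTo OPT h' := hOPTr
          have h2 : 0 < (HRLQ.matchedTo OPT h').ncard :=
            (Set.ncard_pos (Set.toFinite _)).mpr ⟨r, h1⟩
          exact le_trans h2 (hOPTm.2 h')
        · have hset : HRLQ.matchedTo (Function.update M r₀ (some h)) h'
              = HRLQ.matchedTo M h' := by
            ext s
            simp only [HRLQ.matchedTo, Set.mem_setOf_eq]
            by_cases hs : s = r₀
            · subst hs
              rw [Function.update_self, hM0]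
              constructor
              · intro heq
                have hq : h = h' := by injection heq
                exact absurd hq.symm hh
              · intro heq; exact absurd heq (by simp)
            · rw [Function.update_of_ne hs]
          rw [hset]; exact hMcap h'
      · intro a b henv
        obtain ⟨h', hb, hpref, hrank⟩ := henv
        by_cases hbr : b = r₀
        · subst hbr
          rw [Function.update_self] at hb
          obtain rfl : h = h' := by injection hb
          have hane : a ≠ b := by
            intro hh; subst hh; exact lt_irrefl _ hrank
          rw [Function.update_of_ne hane] at hpref
          have hEah : I.E a h := hpref.1
          by_cases hMa : M a = none
          · have haU : a ∈ U := by simp [hU, hMa, hEah]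
            exact absurd hrank (not_lt.mpr (hmin a haU))
          · exact hno' a hMa hEah
        · rw [Function.update_of_ne hbr] at hb
          by_cases har : a = r₀
          · subst har
            rw [Function.update_self] at hpref
            refine hMef a b ⟨h', hb, ⟨hpref.1, ?_⟩, hrank⟩
            intro h'' heq
            rw [hM0] at heq
            exact absurd heq (by simp)
          · rw [Function.update_of_ne har] at hpref
            exact hMef a b ⟨h', hb, hpref, hrank⟩
    · exact ⟨r, hMr, hErh⟩
  -- choose a charge function
  have key' : ∀ r, ∃ s, OPT r ≠ none → (M s ≠ none ∧ ∃ h, OPT r = some h ∧ I.E s h) := by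
    intro r
    by_cases hr : OPT r = none
    · exact ⟨r, fun h' => absurd hr h'⟩
    · obtain ⟨h, hOPTr⟩ := Option.ne_none_iff_exists'.mp hr
      obtain ⟨s, hs1, hs2⟩ := key r h hOPTr
      exact ⟨s, fun _ => ⟨hs1, h, hOPTr, hs2⟩⟩
  choose f hf using key'
  -- counting
  set A : Finset R := Finset.univ.filter (fun r => OPT r ≠ none) with hA
  set B : Finset R := Finset.univ.filter (fun r => M r ≠ none) with hB
  have hmapsto : ∀ r ∈ A, f r ∈ B := by
    intro r hr
    rw [hA, Finset.mem_filter] at hr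
    rw [hB, Finset.mem_filter]
    exact ⟨Finset.mem_univ _, (hf r hr.2).1⟩
  have hcard : A.card = ∑ s ∈ B, (A.filter (fun r => f r = s)).card :=
    Finset.card_eq_sum_card_fiberwise hmapsto
  have hcol : ∀ h, (Finset.univ.filter (fun r => OPT r = some h)).card ≤ ℓ₂ := by
    intro h
    have hsub : Finset.univ.filter (fun r => OPT r = some h)
        ⊆ Finset.univ.filter (fun r => I.E r h) := by
      intro r hr
      rw [Finset.mem_filter] at hr ⊢
      exact ⟨Finset.mem_univ _, hOPTm.1 r h hr.2⟩
    calc (Finset.univ.filter (fun r => OPT r = some h)).card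
        ≤ (Finset.univ.filter (fun r => I.E r h)).card := Finset.card_le_card hsub
      _ = {r | I.E r h}.ncard := (ncard_eq_filter_card _).symm
      _ ≤ ℓ₂ := hlen₂ h
  have hfiber : ∀ s, (A.filter (fun r => f r = s)).card ≤ ℓ₁ * ℓ₂ := by
    intro s
    have hsub : A.filter (fun r => f r = s) ⊆
        (Finset.univ.filter (fun h => I.E s h)).biUnion
          (fun h => Finset.univ.filter (fun r => OPT r = some h)) := by
      intro r hr
      rw [Finset.mem_filter] at hr
      obtain ⟨hrA, hfr⟩ := hr
      rw [hA, Finset.mem_filter] at hrA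
      obtain ⟨-, hrne⟩ := hrA
      obtain ⟨-, h, hOPTr, hEs⟩ := hf r hrne
      rw [Finset.mem_biUnion]
      refine ⟨h, ?_, ?_⟩
      · rw [Finset.mem_filter]; exact ⟨Finset.mem_univ _, by rw [← hfr]; exact hEs⟩
      · rw [Finset.mem_filter]; exact ⟨Finset.mem_univ _, hOPTr⟩
    calc (A.filter (fun r => f r = s)).card
        ≤ ((Finset.univ.filter (fun h => I.E s h)).biUnion
            (fun h => Finset.univ.filter (fun r => OPT r = some h))).card :=
          Finset.card_le_card hsub
      _ ≤ ∑ h ∈ Finset.univ.filter (fun h => I.E s h),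
            (Finset.univ.filter (fun r => OPT r = some h)).card :=
          Finset.card_biUnion_le
      _ ≤ ∑ _h ∈ Finset.univ.filter (fun h => I.E s h), ℓ₂ :=
          Finset.sum_le_sum (fun h _ => hcol h)
      _ = (Finset.univ.filter (fun h => I.E s h)).card * ℓ₂ := by
          rw [Finset.sum_const, smul_eq_mul]
      _ ≤ ℓ₁ * ℓ₂ := by
          refine Nat.mul_le_mul_right _ ?_
          calc (Finset.univ.filter (fun h => I.E s h)).card
              = {h | I.E s h}.ncard := (ncard_eq_filter_card _).symm
            _ ≤ ℓ₁ := hlen₁ s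
  have hAcard : HRLQ.msize OPT = A.card := by
    rw [hA, HRLQ.msize, ncard_eq_filter_card]
  have hBcard : HRLQ.msize M = B.card := by
    rw [hB, HRLQ.msize, ncard_eq_filter_card]
  rw [hAcard, hBcard]
  calc A.card = ∑ s ∈ B, (A.filter (fun r => f r = s)).card := hcard
    _ ≤ ∑ _s ∈ B, ℓ₁ * ℓ₂ := Finset.sum_le_sum (fun s _ => hfiber s)
    _ = B.card * (ℓ₁ * ℓ₂) := by rw [Finset.sum_const, smul_eq_mul]
    _ = ℓ₁ * ℓ₂ * B.card := by ring
end
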